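/- arXiv:1309.0269 — 6 statements merged into one kernel-verified Lean document; each statement's English description precedes it below -/
import Mathlib

section
/- Let G be a finite connected graph with injective edge weights, and let T be its minimal spanning tree. For any two vertices x and y, the unique path in T from x to y is a minimax path: it minimizes, over all paths from x to y in G, the maximum edge weight along the path. -/
open SimpleGraph

variable {V : Type*}

/-- The total weight of (the edge set of) a graph. -/
noncomputable def graphWeight [Fintype V] (T : SimpleGraph V) (w : Sym2 V → ℝ) : ℝ :=
  ∑ e ∈ T.edgeSet.toFinite.toFinset, w e

/-- `T` is a spanning tree of `G`: a subgraph (on all the vertices) which is a tree. -/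
def IsSpanningTree (G T : SimpleGraph V) : Prop := T ≤ G ∧ T.IsTree

/-- `T` is a minimal spanning tree of `G` with respect to the weights `w`. -/
def IsMST [Fintype V] (G : SimpleGraph V) (w : Sym2 V → ℝ) (T : SimpleGraph V) : Prop :=
  IsSpanningTree G T ∧
    ∀ T' : SimpleGraph V, IsSpanningTree G T' → graphWeight T w ≤ graphWeight T' w


/-- If a path in a tree contains edge `e`, its endpoints are disconnected after deleting `e`. -/
lemma not_reach_delete_of_mem_path {T : SimpleGraph V} (hT : T.IsTree) {x y : V} {p : T.Walk x y}
    (hp : p.IsPath) {e : Sym2 V} (he : e ∈ p.edges) :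
    ¬ (T.deleteEdges {e}).Reachable x y := by
  classical
  intro hr
  obtain ⟨r⟩ := hr
  let r' := r.toPath
  have hsub : ∀ g ∈ r'.val.edges, g ∈ T.edgeSet := fun g hg => by
    have := r'.val.edges_subset_edgeSet hg
    rw [edgeSet_deleteEdges] at this
    exact this.1
  have hrt : (r'.val.transfer T hsub).IsPath := r'.prop.transfer _
  obtain ⟨P, _, hPu⟩ := hT.existsUnique_path x y
  have h1 : r'.val.transfer T hsub = P := hPu _ hrt
  have h2 : p = P := hPu _ hp
  have he' : e ∈ (r'.val.transfer T hsub).edges := by rw [h1, ← h2]; exact he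
  rw [Walk.edges_transfer] at he'
  have := r'.val.edges_subset_edgeSet he'
  rw [edgeSet_deleteEdges] at this
  exact this.2 rfl

lemma reach_endpoint_aux {T : SimpleGraph V} (a b : V) {v c : V} (r : T.Walk v c) :
    (T.deleteEdges {s(a, b)}).Reachable v c ∨ (T.deleteEdges {s(a, b)}).Reachable v a ∨
      (T.deleteEdges {s(a, b)}).Reachable v b := by
  induction r with
  | nil => exact Or.inl (Reachable.refl _)
  | @cons u u' _ h q ih =>
    by_cases hse : s(u, u') = s(a, b)
    · rcases Sym2.eq_iff.mp hse with ⟨rfl, rfl⟩ | ⟨rfl, rfl⟩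
      · exact Or.inr (Or.inl (Reachable.refl _))
      · exact Or.inr (Or.inr (Reachable.refl _))
    · have hadj : (T.deleteEdges {s(a, b)}).Adj u u' :=
        deleteEdges_adj.mpr ⟨h, by simpa using hse⟩
      rcases ih with h' | h' | h'
      · exact Or.inl (hadj.reachable.trans h')
      · exact Or.inr (Or.inl (hadj.reachable.trans h'))
      · exact Or.inr (Or.inr (hadj.reachable.trans h'))

/-- After deleting edge `s(a,b)` from a connected graph, every vertex still reaches `a` or `b`. -/
lemma reach_endpoint {T : SimpleGraph V} (hc : T.Connected) (a b v : V) :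
    (T.deleteEdges {s(a, b)}).Reachable v a ∨ (T.deleteEdges {s(a, b)}).Reachable v b := by
  obtain ⟨r⟩ := hc v a
  rcases reach_endpoint_aux a b r with h | h | h
  exacts [Or.inl h, Or.inl h, Or.inr h]

/-- The exchange argument. -/
lemma mst_exchange [Fintype V] {G T : SimpleGraph V} {w : Sym2 V → ℝ}
    (hT : IsMST G w T) {a b u v : V} (hab : T.Adj a b) (huv : G.Adj u v)
    (hlt : w s(u, v) < w s(a, b))
    (hu : (T.deleteEdges {s(a, b)}).Reachable a u)
    (hv : (T.deleteEdges {s(a, b)}).Reachable b v) : False := by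
  classical
  set T' := T.deleteEdges {s(a, b)} with hT'
  have htree : T.IsTree := hT.1.2
  have hA : ¬ T'.Reachable a b := by
    refine not_reach_delete_of_mem_path htree (p := Walk.cons hab Walk.nil) ?_ (by simp)
    simp [Walk.isPath_def, hab.ne]
  have hfne : s(u, v) ≠ s(a, b) := fun h => absurd (h ▸ hlt) (lt_irrefl _)
  have hfT : s(u, v) ∉ T.edgeSet := by
    intro hmem
    have : T'.Adj u v := deleteEdges_adj.mpr ⟨hmem, by simpa using hfne⟩
    exact hA (hu.trans (this.reachable.trans hv.symm))
  set T₂ := T' ⊔ fromEdgeSet {s(u, v)} with hT₂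
  have hT'le : T' ≤ T₂ := le_sup_left
  have h2uv : T₂.Adj u v := by rw [hT₂]; exact (sup_adj _ _ _ _).mpr (Or.inr ((fromEdgeSet_adj _).mpr ⟨rfl, huv.ne⟩))
  have hle2 : T₂ ≤ G := by
    refine sup_le ((T.deleteEdges_le _).trans hT.1.1) ?_
    calc fromEdgeSet {s(u, v)} ≤ fromEdgeSet G.edgeSet :=
          fromEdgeSet_mono (by simp [huv])
      _ = G := G.fromEdgeSet_edgeSet
  have hab2 : T₂.Reachable a b :=
    (hu.mono hT'le).trans (h2uv.reachable.trans (hv.mono hT'le).symm)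
  have hconn2 : T₂.Connected := by
    rw [connected_iff]
    refine ⟨fun z z' => ?_, htree.isConnected.nonempty⟩
    have hz := reach_endpoint htree.isConnected a b z
    have hz' := reach_endpoint htree.isConnected a b z'
    rcases hz with hz | hz <;> rcases hz' with hz' | hz'
    · exact (hz.mono hT'le).trans (hz'.mono hT'le).symm
    · exact (hz.mono hT'le).trans (hab2.trans (hz'.mono hT'le).symm)
    · exact (hz.mono hT'le).trans (hab2.symm.trans (hz'.mono hT'le).symm)
    · exact (hz.mono hT'le).trans (hz'.mono hT'le).symm
  have hdel2 : T₂.deleteEdges {s(u, v)} ≤ T' := by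
    intro z z' hzz
    rw [deleteEdges_adj] at hzz
    rcases hzz.1 with h | h
    · exact h
    · exact absurd ((fromEdgeSet_adj _).mp h).1 hzz.2
  have hacyc2 : T₂.IsAcyclic := by
    intro v0 c hc
    by_cases hf : s(u, v) ∈ c.edges
    · have := (adj_and_reachable_delete_edges_iff_exists_cycle (G := T₂)).mpr ⟨v0, c, hc, hf⟩
      have hr : T'.Reachable u v := this.2.mono hdel2
      exact hA (hu.trans (hr.trans hv.symm))
    · have hsub : ∀ g ∈ c.edges, g ∈ T.edgeSet := fun g hg => by
        have := c.edges_subset_edgeSet hg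
        rw [hT₂, edgeSet_sup, hT', edgeSet_deleteEdges, edgeSet_fromEdgeSet] at this
        rcases this with h | h
        · exact h.1
        · exact absurd h.1 (fun h' => hf (h' ▸ hg))
      exact htree.IsAcyclic (c.transfer T hsub) (hc.transfer hsub)
  have hspan2 : IsSpanningTree G T₂ := ⟨hle2, ⟨hconn2, hacyc2⟩⟩
  -- weight computation
  have heT : s(a, b) ∈ T.edgeSet.toFinite.toFinset := by
    simp only [Set.Finite.mem_toFinset]; exact hab
  have hE2 : T₂.edgeSet.toFinite.toFinset
      = insert s(u, v) (T.edgeSet.toFinite.toFinset.erase s(a, b)) := by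
    ext g
    simp only [Set.Finite.mem_toFinset, hT₂, edgeSet_sup, hT', edgeSet_deleteEdges,
      edgeSet_fromEdgeSet, Set.mem_union, Set.mem_diff, Set.mem_singleton_iff,
      Finset.mem_insert, Finset.mem_erase, Set.mem_setOf_eq, Set.Finite.mem_toFinset]
    constructor
    · rintro (⟨h1, h2⟩ | ⟨h1, _⟩)
      · exact Or.inr ⟨h2, h1⟩
      · exact Or.inl h1
    · rintro (rfl | ⟨h1, h2⟩)
      · exact Or.inr ⟨rfl, by simp [huv.ne]⟩
      · exact Or.inl ⟨h2, h1⟩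
  have hw2 : graphWeight T₂ w
      = w s(u, v) + ∑ g ∈ T.edgeSet.toFinite.toFinset.erase s(a, b), w g := by
    rw [graphWeight, hE2, Finset.sum_insert (by simp only [Finset.mem_erase, Set.Finite.mem_toFinset]; exact fun h => hfT h.2)]
  have hsplit : (∑ g ∈ T.edgeSet.toFinite.toFinset.erase s(a, b), w g) + w s(a, b)
      = graphWeight T w := Finset.sum_erase_add _ _ heT
  have := hT.2 T₂ hspan2
  linarith

/-- Paths of the minimal spanning tree are minimax: among all paths in `G` between the two
endpoints, they minimize the maximal edge weight. -/
theorem mst_path_minimax [Fintype V] (G : SimpleGraph V) (hG : G.Connected)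
    (w : Sym2 V → ℝ) (hw : Set.InjOn w G.edgeSet)
    (T : SimpleGraph V) (hT : IsMST G w T) (x y : V)
    (p : T.Walk x y) (hp : p.IsPath) (q : G.Walk x y) (hq : q.IsPath) :
    (p.edges.map w).maximum ≤ (q.edges.map w).maximum := by
  classical
  cases hm : (p.edges.map w).maximum with
  | bot => exact bot_le
  | coe m =>
    by_contra hcon
    rw [not_le] at hcon
    have hmmem : m ∈ p.edges.map w := List.maximum_mem hm
    obtain ⟨e, heq, hwe⟩ := List.mem_map.mp hmmem
    have hqlt : ∀ g ∈ q.edges, w g < w e := by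
      intro g hg
      have h1 : (w g : WithBot ℝ) ≤ (q.edges.map w).maximum :=
        List.le_maximum_of_mem' (List.mem_map_of_mem (f := w) hg)
      have h2 : (w g : WithBot ℝ) < (m : WithBot ℝ) := lt_of_le_of_lt h1 hcon
      rw [hwe]
      exact_mod_cast h2
    clear hm hmmem hcon hwe
    revert heq
    induction e using Sym2.ind with
    | _ a b =>
    intro heq
    have hab : T.Adj a b := p.adj_of_mem_edges heq
    have htree : T.IsTree := hT.1.2
    have hB : ¬ (T.deleteEdges {s(a, b)}).Reachable x y :=
      not_reach_delete_of_mem_path htree hp heq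
    set S : Set V := {z | (T.deleteEdges {s(a, b)}).Reachable x z} with hS
    have hxS : x ∈ S := Reachable.refl x
    obtain ⟨d, hd, hds, hdt⟩ := q.exists_boundary_dart S hxS hB
    have hdq : d.edge ∈ q.edges := List.mem_map_of_mem (f := Dart.edge) hd
    have hde : d.edge = s(d.fst, d.snd) := rfl
    have hlt' : w s(d.fst, d.snd) < w s(a, b) := by
      rw [← hde]; exact hqlt _ hdq
    rcases reach_endpoint htree.isConnected a b x with hxa | hxb
    · have hu : (T.deleteEdges {s(a, b)}).Reachable a d.fst := hxa.symm.trans hds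
      have hv : (T.deleteEdges {s(a, b)}).Reachable b d.snd := by
        rcases reach_endpoint htree.isConnected a b d.snd with h2 | h2
        · exact absurd (hxa.trans h2.symm) hdt
        · exact h2.symm
      exact mst_exchange hT hab d.adj hlt' hu hv
    · have hswap : s(b, a) = s(a, b) := Sym2.eq_swap
      have hlt'' : w s(d.fst, d.snd) < w s(b, a) := by rw [hswap]; exact hlt'
      have hu : (T.deleteEdges {s(b, a)}).Reachable b d.fst := by
        rw [hswap]; exact hxb.symm.trans hds
      have hv : (T.deleteEdges {s(b, a)}).Reachable a d.snd := by
        rw [hswap]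
        rcases reach_endpoint htree.isConnected a b d.snd with h2 | h2
        · exact h2.symm
        · exact absurd (hxb.trans h2.symm) hdt
      exact mst_exchange hT hab.symm d.adj hlt'' hu hv
end

section
/- Let G be a finite connected graph with injective edge weights w and minimal spanning tree T. For p ∈ ℝ, let the p-clusters be the connected components of the subgraph of G consisting of edges e with w(e) ≤ p. Then for any p-cluster C and any two vertices x, y ∈ C, the unique path in T from x to y uses only edges with weight at most p; in particular it stays inside C. -/
open SimpleGraph

variable {V : Type*}

/-- On a walk from a vertex satisfying `P` to one not satisfying `P`, some edge crosses. -/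
lemma exists_crossing_edge {H : SimpleGraph V} (P : V → Prop) {x y : V} (W : H.Walk x y) :
    P x → ¬ P y → ∃ u v, H.Adj u v ∧ P u ∧ ¬ P v := by
  induction W with
  | nil => exact fun hx hy => absurd hx hy
  | @cons a b c h q ih =>
    intro hx hy
    by_cases hb : P b
    · exact ih hb hy
    · exact ⟨a, b, h, hx, hb⟩

/-- After deleting the edge `s(a,b)`, every vertex reachable (in the original graph) from a
vertex reachable to `a` or `b` is still reachable to `a` or `b`. -/
lemma reach_endpoint_s4 {T : SimpleGraph V} {a b : V} {c z : V} (q : T.Walk c z) :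
    ((T \ fromEdgeSet {s(a, b)}).Reachable a c ∨ (T \ fromEdgeSet {s(a, b)}).Reachable b c) →
    ((T \ fromEdgeSet {s(a, b)}).Reachable a z ∨ (T \ fromEdgeSet {s(a, b)}).Reachable b z) := by
  induction q with
  | nil => exact id
  | @cons c m z h q ih =>
    intro hc
    apply ih
    by_cases hf : s(c, m) = s(a, b)
    · rw [Sym2.eq_iff] at hf
      rcases hf with ⟨rfl, rfl⟩ | ⟨rfl, rfl⟩
      · exact Or.inr (Reachable.refl _)
      · exact Or.inl (Reachable.refl _)
    · have hD : (T \ fromEdgeSet {s(a, b)}).Adj c m := by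
        rw [sdiff_adj, fromEdgeSet_adj]
        exact ⟨h, fun hh => hf hh.1⟩
      exact hc.imp (fun r => r.trans hD.reachable) (fun r => r.trans hD.reachable)

/-- If `x` and `y` lie in the same `p`-cluster (connected component of edges of weight `≤ p`),
then the path of the minimal spanning tree from `x` to `y` uses only edges of weight `≤ p`;
in particular it stays inside the `p`-cluster of `x`. -/
theorem mst_path_stays_in_cluster [Fintype V] (G : SimpleGraph V) (hG : G.Connected)
    (w : Sym2 V → ℝ) (hw : Set.InjOn w G.edgeSet)
    (T : SimpleGraph V) (hT : IsMST G w T) (p : ℝ) (x y : V)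
    (hxy : (G.deleteEdges {e | p < w e}).Reachable x y)
    (pth : T.Walk x y) (hpth : pth.IsPath) :
    (∀ f ∈ pth.edges, w f ≤ p) ∧
      ∀ v ∈ pth.support, (G.deleteEdges {e | p < w e}).Reachable x v := by
  classical
  obtain ⟨⟨hTG, hTree⟩, hmin⟩ := hT
  have key : ∀ f ∈ pth.edges, w f ≤ p := by
    intro f hf
    by_contra hfp
    push_neg at hfp
    induction f using Sym2.ind with
    | _ a b =>
    have hfT : s(a, b) ∈ T.edgeSet := pth.edges_subset_edgeSet hf
    have hab : T.Adj a b := hfT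
    set D := T \ fromEdgeSet {s(a, b)} with hD
    have hDT : D ≤ T := sdiff_le
    -- `y` is not reachable from `x` after deleting the heavy edge, by uniqueness of paths.
    have hPy : ¬ D.Reachable x y := by
      rintro ⟨q⟩
      set q' := q.transfer T (fun e he => edgeSet_mono hDT (q.edges_subset_edgeSet he)) with hq'
      have hfq : s(a, b) ∉ q'.edges := by
        intro hmem
        rw [hq', Walk.edges_transfer] at hmem
        have hge := q.edges_subset_edgeSet hmem
        rw [hD, edgeSet_sdiff, edgeSet_fromEdgeSet] at hge
        simp [hab.ne] at hge
      obtain ⟨P, hP, hPuniq⟩ := hTree.existsUnique_path x y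
      have h1 : pth = (q'.toPath : T.Walk x y) := by
        rw [hPuniq pth hpth, hPuniq (q'.toPath : T.Walk x y) q'.toPath.2]
      exact hfq (Walk.edges_toPath_subset q' (h1 ▸ hf))
    have hbridge : ¬ D.Reachable a b :=
      ((isBridge_iff).mp (isAcyclic_iff_forall_edge_isBridge.mp hTree.2 hfT))
    -- find a crossing light edge
    obtain ⟨W⟩ := hxy
    obtain ⟨u, v, huv, hPu, hPv⟩ :=
      exists_crossing_edge (fun z => D.Reachable x z) W (Reachable.refl x) hPy
    have hGuv : G.Adj u v := (deleteEdges_le _) huv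
    have hwuv : w s(u, v) ≤ p := by
      have h2 := (deleteEdges_adj.mp huv).2
      simpa using h2
    have hne_f : s(u, v) ≠ s(a, b) := by
      intro h
      rw [h] at hwuv
      exact absurd hfp (not_lt.mpr hwuv)
    have h_uv_nD : ¬ D.Reachable u v := fun h => hPv (hPu.trans h)
    have heT : s(u, v) ∉ T.edgeSet := by
      intro h
      refine h_uv_nD (Adj.reachable ?_)
      rw [hD, sdiff_adj, fromEdgeSet_adj]
      exact ⟨h, fun hh => hne_f hh.1⟩
    set T' := D ⊔ fromEdgeSet {s(u, v)} with hT'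
    have hT'uv : T'.Adj u v := by
      rw [hT', sup_adj, fromEdgeSet_adj]
      exact Or.inr ⟨rfl, hGuv.ne⟩
    -- both sides of the cut
    have lemB : ∀ z, D.Reachable a z ∨ D.Reachable b z := fun z =>
      (hTree.1.preconnected a z).elim fun q => reach_endpoint_s4 q (Or.inl (Reachable.refl a))
    have K : ∀ z, D.Reachable x z ∨ D.Reachable v z := by
      intro z
      rcases lemB x with hxs | hxs <;> rcases lemB v with hvs | hvs <;>
        rcases lemB z with hzs | hzs
      · exact Or.inl (hxs.symm.trans hzs)
      · exact absurd (hxs.symm.trans hvs) hPv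
      · exact Or.inl (hxs.symm.trans hzs)
      · exact Or.inr (hvs.symm.trans hzs)
      · exact Or.inr (hvs.symm.trans hzs)
      · exact Or.inl (hxs.symm.trans hzs)
      · exact absurd (hxs.symm.trans hvs) hPv
      · exact Or.inl (hxs.symm.trans hzs)
    have hx2 : ∀ z, T'.Reachable x z := by
      intro z
      rcases K z with h | h
      · exact h.mono le_sup_left
      · exact (hPu.mono le_sup_left).trans (hT'uv.reachable.trans (h.mono le_sup_left))
    have hT'conn : T'.Connected := by
      rw [connected_iff]
      exact ⟨fun z₁ z₂ => (hx2 z₁).symm.trans (hx2 z₂), ⟨x⟩⟩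
    have hT'acyc : T'.IsAcyclic := by
      intro v₀ c hc
      by_cases he : s(u, v) ∈ c.edges
      · have h2 := (adj_and_reachable_delete_edges_iff_exists_cycle.mpr ⟨v₀, c, hc, he⟩).2
        refine h_uv_nD (h2.mono ?_)
        intro c1 c2 hc12
        change (T' \ fromEdgeSet {s(u, v)}).Adj c1 c2 at hc12
        rw [sdiff_adj] at hc12
        rcases hc12.1 with h | h
        · exact h
        · exact absurd h hc12.2
      · have hsub : ∀ g ∈ c.edges, g ∈ T.edgeSet := by
          intro g hg
          have h1 := c.edges_subset_edgeSet hg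
          rw [hT', edgeSet_sup] at h1
          rcases h1 with h | h
          · exact edgeSet_mono hDT h
          · rw [edgeSet_fromEdgeSet] at h
            have : g = s(u, v) := h.1
            exact absurd (this ▸ hg) he
        exact hTree.2 _ (hc.transfer hsub)
    have hT'G : T' ≤ G := by
      apply sup_le (hDT.trans hTG)
      intro c1 c2 h12
      rw [fromEdgeSet_adj, Set.mem_singleton_iff] at h12
      rw [← mem_edgeSet, h12.1]
      exact hGuv
    -- the edge set of the new tree
    have hnd : ¬ (s(a, b) : Sym2 V).IsDiag := by simp [hab.ne]
    have hEset : T'.edgeSet = insert s(u, v) (T.edgeSet \ {s(a, b)}) := by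
      rw [hT', hD, edgeSet_sup, edgeSet_sdiff, edgeSet_fromEdgeSet, edgeSet_fromEdgeSet]
      ext g
      simp only [Set.mem_union, Set.mem_diff, Set.mem_singleton_iff, Set.mem_insert_iff,
        Set.mem_setOf_eq]
      constructor
      · rintro (⟨hgT, hgn⟩ | ⟨rfl, _⟩)
        · exact Or.inr ⟨hgT, fun hgf => hgn ⟨hgf, hgf ▸ hnd⟩⟩
        · exact Or.inl rfl
      · rintro (rfl | ⟨hgT, hgf⟩)
        · exact Or.inr ⟨rfl, by simp [hGuv.ne]⟩
        · exact Or.inl ⟨hgT, fun hh => hgf hh.1⟩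
    have hfin : T'.edgeSet.toFinite.toFinset
        = insert s(u, v) ((T.edgeSet.toFinite.toFinset).erase s(a, b)) := by
      ext g
      simp only [Set.Finite.mem_toFinset, hEset, Set.mem_insert_iff, Set.mem_diff,
        Set.mem_singleton_iff, Finset.mem_insert, Finset.mem_erase]
      tauto
    have hsum : graphWeight T' w = w s(u, v) + (graphWeight T w - w s(a, b)) := by
      rw [graphWeight, hfin, Finset.sum_insert
        (fun h => heT ((Set.Finite.mem_toFinset _).mp (Finset.mem_erase.mp h).2)),
        Finset.sum_erase_eq_sub (by simpa using hfT)]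
      rfl
    have hle := hmin T' ⟨hT'G, ⟨hT'conn, hT'acyc⟩⟩
    rw [hsum] at hle
    linarith
  refine ⟨key, ?_⟩
  have hsub : ∀ g ∈ pth.edges, g ∈ (G.deleteEdges {e | p < w e}).edgeSet := by
    intro g hg
    rw [edgeSet_deleteEdges]
    exact ⟨edgeSet_mono hTG (pth.edges_subset_edgeSet hg),
      by simpa using not_lt.mpr (key g hg)⟩
  intro v hv
  exact ⟨(pth.transfer _ hsub).takeUntil v (by rwa [Walk.support_transfer])⟩
end

section
/- Let G be a finite connected graph with injective edge weights w, let T be its minimal spanning tree, and fix p ∈ ℝ. Let G^p be the graph obtained by contracting each p-cluster of G to a single vertex (keeping edges of weight > p between distinct clusters, with their weights). Then the image of T under these contractions is precisely the minimal spanning tree of G^p. -/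
open SimpleGraph

variable {V : Type*}

/-- The edges of `G` of weight at most `p`. -/
def lowEdges [Fintype V] (G : SimpleGraph V) (w : Sym2 V → ℝ) (p : ℝ) : Set (Sym2 V) :=
  {e ∈ G.edgeSet | w e ≤ p}

/-- A set `S` of edges of weight `> p` is a spanning tree of the contracted graph `G^p`
(whose vertices are the `p`-clusters): together with all the edges of weight `≤ p` it connects
the graph, and it is minimal (no edge of `S` can be removed keeping connectivity). -/
def IsClusterSpanningTree [Fintype V] (G : SimpleGraph V) (w : Sym2 V → ℝ) (p : ℝ)
    (S : Set (Sym2 V)) : Prop :=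
  S ⊆ {e ∈ G.edgeSet | p < w e} ∧
  (SimpleGraph.fromEdgeSet (lowEdges G w p ∪ S)).Connected ∧
  ∀ e ∈ S, ¬ (SimpleGraph.fromEdgeSet (lowEdges G w p ∪ (S \ {e}))).Connected

lemma fromEdgeSet_le_of_subset {s : Set (Sym2 V)} {G : SimpleGraph V} (h : s ⊆ G.edgeSet) :
    fromEdgeSet s ≤ G := by
  conv_rhs => rw [← fromEdgeSet_edgeSet G]
  exact fromEdgeSet_mono h

/-- A walk from inside `C` to outside `C` crosses the boundary at some edge. -/
lemma exists_crossing_edge_s5 {H : SimpleGraph V} {C : Set V} :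
    ∀ {u v : V} (W : H.Walk u v), u ∈ C → v ∉ C →
      ∃ a b, H.Adj a b ∧ s(a, b) ∈ W.edges ∧ a ∈ C ∧ b ∉ C := by
  intro u v W
  induction W with
  | nil => intro h h'; exact absurd h h'
  | @cons u m v h q ih =>
    intro hu hv
    by_cases hm : m ∈ C
    · obtain ⟨a, b, hab, he, ha, hb⟩ := ih hm hv
      exact ⟨a, b, hab, by simp [he], ha, hb⟩
    · exact ⟨u, m, h, by simp, hu, hm⟩

lemma walk_reach_aux {T : SimpleGraph V} (a b : V) :
    ∀ {z y : V} (_W : T.Walk z y),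
      (T.deleteEdges {s(a, b)}).Reachable z y ∨
        ((T.deleteEdges {s(a, b)}).Reachable z a ∨ (T.deleteEdges {s(a, b)}).Reachable z b) := by
  intro z y W
  induction W with
  | nil => exact Or.inl (Reachable.refl _)
  | @cons u m v h q ih =>
    by_cases he : s(u, m) = s(a, b)
    · rw [Sym2.eq_iff] at he
      rcases he with ⟨rfl, rfl⟩ | ⟨rfl, rfl⟩
      · exact Or.inr (Or.inl (Reachable.refl _))
      · exact Or.inr (Or.inr (Reachable.refl _))
    · have hadj : (T.deleteEdges {s(a, b)}).Adj u m := by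
        rw [deleteEdges_adj]; exact ⟨h, by simpa using he⟩
      rcases ih with h1 | h1 | h1
      · exact Or.inl (hadj.reachable.trans h1)
      · exact Or.inr (Or.inl (hadj.reachable.trans h1))
      · exact Or.inr (Or.inr (hadj.reachable.trans h1))

/-- Deleting one edge from a connected graph: every vertex can still reach one endpoint. -/
lemma reachable_endpoint_of_deleteEdge {T : SimpleGraph V} (hc : T.Connected) (a b z : V) :
    (T.deleteEdges {s(a, b)}).Reachable z a ∨ (T.deleteEdges {s(a, b)}).Reachable z b := by
  obtain ⟨W⟩ := hc.preconnected z a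
  rcases walk_reach_aux a b W with h | h
  · exact Or.inl h
  · exact h

/-- In a tree, deleting an edge of the (unique) path between `u` and `v` disconnects them. -/
lemma not_reachable_deleteEdges_of_mem_path {T : SimpleGraph V} (hT : T.IsTree) {u v : V}
    (P : T.Walk u v) (hP : P.IsPath) {g : Sym2 V} (hg : g ∈ P.edges) :
    ¬ (T.deleteEdges {g}).Reachable u v := by
  classical
  rintro ⟨W⟩
  have hsub : ∀ e ∈ W.toPath.1.edges, e ∈ T.edgeSet := by
    intro e he
    have := W.toPath.1.edges_subset_edgeSet he
    rw [edgeSet_deleteEdges] at this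
    exact this.1
  have hnotg : g ∉ W.toPath.1.edges := by
    intro hmem
    have := W.toPath.1.edges_subset_edgeSet hmem
    rw [edgeSet_deleteEdges] at this
    exact this.2 rfl
  have hpath : ((W.toPath.1).transfer T hsub).IsPath := (W.toPath.2).transfer hsub
  have huniq := hT.existsUnique_path u v
  have hPeq : P = (W.toPath.1).transfer T hsub := huniq.unique hP hpath
  rw [hPeq, SimpleGraph.Walk.edges_transfer] at hg
  exact hnotg hg

/-- Reachability transfers along edgewise reachability. -/
lemma reachable_of_forall_adj_reachable {A B : SimpleGraph V}
    (h : ∀ u v, A.Adj u v → B.Reachable u v) {u v : V} (hr : A.Reachable u v) :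
    B.Reachable u v := by
  obtain ⟨W⟩ := hr
  induction W with
  | nil => exact Reachable.refl _
  | @cons u m v hadj q ih => exact (h _ _ hadj).trans ih

/-- The exchange lemma: swapping an edge of a spanning tree for an edge reconnecting the
two pieces yields a spanning tree, whose weight differs by the two edge weights. -/
lemma exchange [Fintype V] {G T : SimpleGraph V} (hle : T ≤ G) (hTt : T.IsTree)
    {a b : V} (he : s(a, b) ∈ T.edgeSet) {x y : V} (hfG : s(x, y) ∈ G.edgeSet)
    (hfT : s(x, y) ∉ T.edgeSet)
    (hnr : ¬ (T.deleteEdges {s(a, b)}).Reachable x y) (w : Sym2 V → ℝ) :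
    IsSpanningTree G (fromEdgeSet ((T.edgeSet \ {s(a, b)}) ∪ {s(x, y)})) ∧
      graphWeight (fromEdgeSet ((T.edgeSet \ {s(a, b)}) ∪ {s(x, y)})) w
        = graphWeight T w - w s(a, b) + w s(x, y) := by
  classical
  set e : Sym2 V := s(a, b) with he'
  set f : Sym2 V := s(x, y) with hf'
  set T3 : SimpleGraph V := fromEdgeSet ((T.edgeSet \ {e}) ∪ {f}) with hT3
  have hxy : x ≠ y := by rintro rfl; exact hnr (Reachable.refl _)
  have hsub : (T.edgeSet \ {e}) ∪ {f} ⊆ G.edgeSet := by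
    rintro g (⟨hg, -⟩ | hg)
    · exact edgeSet_subset_edgeSet.2 hle hg
    · rw [Set.mem_singleton_iff] at hg; subst hg; exact hfG
  have hT3le : T3 ≤ G := fromEdgeSet_le_of_subset hsub
  have hdel : T.deleteEdges {e} ≤ T3 := by
    intro u v huv
    rw [deleteEdges_adj] at huv
    rw [hT3, fromEdgeSet_adj]
    exact ⟨Or.inl ⟨huv.1, huv.2⟩, huv.1.ne⟩
  have hfadj : T3.Adj x y := by
    rw [hT3, fromEdgeSet_adj]; exact ⟨Or.inr rfl, hxy⟩
  have hTc : T.Connected := hTt.isConnected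
  have hconn : T3.Connected := by
    have hdi : ∀ z, (T.deleteEdges {e}).Reachable z a ∨ (T.deleteEdges {e}).Reachable z b :=
      fun z => reachable_endpoint_of_deleteEdge hTc a b z
    have key : ∀ z, T3.Reachable z x ∨ T3.Reachable z y := by
      rcases hdi x with hx | hx <;> rcases hdi y with hy | hy
      · exact absurd (hx.trans hy.symm) hnr
      · intro z
        rcases hdi z with hz | hz
        · exact Or.inl ((hz.mono hdel).trans (hx.mono hdel).symm)
        · exact Or.inr ((hz.mono hdel).trans (hy.mono hdel).symm)
      · intro z
        rcases hdi z with hz | hz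
        · exact Or.inr ((hz.mono hdel).trans (hy.mono hdel).symm)
        · exact Or.inl ((hz.mono hdel).trans (hx.mono hdel).symm)
      · exact absurd (hx.trans hy.symm) hnr
    rw [connected_iff]
    refine ⟨?_, ⟨x⟩⟩
    intro u v
    rcases key u with hu | hu <;> rcases key v with hv | hv
    · exact hu.trans hv.symm
    · exact (hu.trans hfadj.reachable).trans hv.symm
    · exact (hu.trans hfadj.reachable.symm).trans hv.symm
    · exact hu.trans hv.symm
  have hacyc : T3.IsAcyclic := by
    intro v0 c hc
    by_cases hfc : f ∈ c.edges
    · have hreach := (adj_and_reachable_delete_edges_iff_exists_cycle.mpr ⟨v0, c, hc, hfc⟩).2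
      have hmono : T3 \ fromEdgeSet {f} ≤ T.deleteEdges {e} := by
        intro u v huv
        obtain ⟨h1, h2⟩ := huv
        rw [hT3, fromEdgeSet_adj] at h1
        have hne : s(u, v) ≠ f := by
          intro hh
          exact h2 (by rw [fromEdgeSet_adj]; exact ⟨hh, h1.2⟩)
        rcases h1.1 with hh | hh
        · rw [deleteEdges_adj]; exact ⟨(mem_edgeSet ..).1 hh.1, by simpa using hh.2⟩
        · exact absurd hh hne
      exact hnr (hreach.mono hmono)
    · have hsubT : ∀ g ∈ c.edges, g ∈ T.edgeSet := by
        intro g hg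
        have := c.edges_subset_edgeSet hg
        rw [hT3, edgeSet_fromEdgeSet] at this
        rcases this.1 with hh | hh
        · exact hh.1
        · rw [Set.mem_singleton_iff] at hh; exact absurd (hh ▸ hg) hfc
      exact hTt.IsAcyclic (c.transfer T hsubT) (hc.transfer hsubT)
  refine ⟨⟨hT3le, ⟨hconn, hacyc⟩⟩, ?_⟩
  have hT3edges : T3.edgeSet = (T.edgeSet \ {e}) ∪ {f} := by
    rw [hT3, edgeSet_fromEdgeSet, sdiff_eq_left]
    rw [Set.disjoint_left]
    rintro g (⟨hg, -⟩ | hg) hd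
    · exact (SimpleGraph.not_isDiag_of_mem_edgeSet T hg) hd
    · rw [Set.mem_singleton_iff] at hg; subst hg
      exact hxy (Sym2.isDiag_iff_proj_eq |>.1 hd)
  have htofin : T3.edgeSet.toFinite.toFinset
      = (T.edgeSet.toFinite.toFinset \ {e}) ∪ {f} := by
    apply Finset.coe_injective
    rw [Finset.coe_union, Finset.coe_sdiff, Finset.coe_singleton, Finset.coe_singleton,
      Set.Finite.coe_toFinset, Set.Finite.coe_toFinset, hT3edges]
  rw [graphWeight, htofin]
  have hfnotin : f ∉ T.edgeSet.toFinite.toFinset \ {e} := by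
    intro h
    exact hfT ((Set.Finite.mem_toFinset _).1 (Finset.mem_sdiff.1 h).1)
  rw [Finset.sum_union (Finset.disjoint_singleton_right.mpr hfnotin), Finset.sum_singleton]
  congr 1
  have hesub : {e} ⊆ T.edgeSet.toFinite.toFinset :=
    Finset.singleton_subset_iff.2 ((Set.Finite.mem_toFinset _).2 he)
  rw [Finset.sum_sdiff_eq_sub hesub, Finset.sum_singleton, graphWeight]

/-- Contracting the `p`-clusters maps the minimal spanning tree of `G` onto the minimal spanning
tree of the contracted graph `G^p`: the edges of `T` of weight `> p` form a spanning tree of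
`G^p` of minimal total weight. -/
theorem mst_contraction [Fintype V] (G : SimpleGraph V) (hG : G.Connected)
    (w : Sym2 V → ℝ) (hw : Set.InjOn w G.edgeSet)
    (T : SimpleGraph V) (hT : IsMST G w T) (p : ℝ) :
    IsClusterSpanningTree G w p {e ∈ T.edgeSet | p < w e} ∧
      ∀ S : Set (Sym2 V), IsClusterSpanningTree G w p S →
        ∑ e ∈ {e ∈ T.edgeSet | p < w e}.toFinite.toFinset, w e ≤
          ∑ e ∈ S.toFinite.toFinset, w e := by
  classical
  obtain ⟨⟨hleT, hTt⟩, hmin⟩ := hT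
  have hTG : T.edgeSet ⊆ G.edgeSet := edgeSet_subset_edgeSet.2 hleT
  have exch_contra : ∀ (a b x y : V), s(a, b) ∈ T.edgeSet → s(x, y) ∈ G.edgeSet →
      s(x, y) ∉ T.edgeSet → ¬ (T.deleteEdges {s(a, b)}).Reachable x y →
      w s(x, y) < w s(a, b) → False := by
    intro a b x y he hfG hfT hnr hlt
    obtain ⟨hsp, hwt⟩ := exchange hleT hTt he hfG hfT hnr w
    have := hmin _ hsp
    rw [hwt] at this
    linarith
  have stepA : ∀ u v : V, (fromEdgeSet (lowEdges G w p)).Adj u v →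
      (fromEdgeSet {e ∈ T.edgeSet | w e ≤ p}).Reachable u v := by
    intro u v huv
    rw [fromEdgeSet_adj] at huv
    obtain ⟨⟨hmemG, hwle⟩, hne⟩ := huv
    by_contra hnot
    set C : Set V := {z | (fromEdgeSet {e ∈ T.edgeSet | w e ≤ p}).Reachable u z} with hC
    have huC : u ∈ C := Reachable.refl _
    have hvC : v ∉ C := hnot
    obtain ⟨P, hP, -⟩ := hTt.existsUnique_path u v
    obtain ⟨x2, y2, hadj, hmem, hxC, hyC⟩ := exists_crossing_edge_s5 P huC hvC
    have hgT : s(x2, y2) ∈ T.edgeSet := hadj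
    have hglow : s(x2, y2) ∉ {e ∈ T.edgeSet | w e ≤ p} := by
      intro h
      exact hyC (hxC.trans (SimpleGraph.Adj.reachable ((fromEdgeSet_adj _).2 ⟨h, hadj.ne⟩)))
    have hgp : p < w s(x2, y2) := lt_of_not_ge fun h => hglow ⟨hgT, h⟩
    have hfT : s(u, v) ∉ T.edgeSet := by
      intro h
      exact hvC (SimpleGraph.Adj.reachable ((fromEdgeSet_adj _).2 ⟨⟨h, hwle⟩, hne⟩))
    have hnr := not_reachable_deleteEdges_of_mem_path hTt P hP hmem
    exact exch_contra x2 y2 u v hgT hmemG hfT hnr (by linarith)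
  constructor
  · refine ⟨fun e he => ⟨hTG he.1, he.2⟩, ?_, ?_⟩
    · -- connectivity of low edges plus high tree edges
      have hTle' : T ≤ fromEdgeSet (lowEdges G w p ∪ {e ∈ T.edgeSet | p < w e}) := by
        intro u v huv
        rw [fromEdgeSet_adj]
        refine ⟨?_, huv.ne⟩
        have hm : s(u, v) ∈ T.edgeSet := huv
        rcases le_or_gt (w s(u, v)) p with h | h
        · exact Or.inl ⟨hTG hm, h⟩
        · exact Or.inr ⟨hm, h⟩
      exact hTt.isConnected.mono hTle'
    · -- removing any high tree edge disconnects
      intro e he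
      induction e using Sym2.ind with
      | _ a b =>
        intro hconn
        obtain ⟨heT, hep⟩ := he
        have hnr_ab : ¬ (T.deleteEdges {s(a, b)}).Reachable a b := by
          have hbridge := isAcyclic_iff_forall_edge_isBridge.1 hTt.IsAcyclic heT
          rw [isBridge_iff] at hbridge
          exact hbridge
        set C : Set V := {z | (T.deleteEdges {s(a, b)}).Reachable a z} with hC
        have haC : a ∈ C := Reachable.refl _
        have hbC : b ∉ C := fun h => hnr_ab h
        obtain ⟨Wab⟩ := hconn.preconnected a b
        obtain ⟨x, y, hadj, hmem, hxC, hyC⟩ := exists_crossing_edge_s5 Wab haC hbC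
        have hxyK := ((fromEdgeSet_adj _).1 hadj).1
        have hne : x ≠ y := ((fromEdgeSet_adj _).1 hadj).2
        have hnotTd : s(x, y) ∉ T.edgeSet \ {s(a, b)} := by
          intro h
          refine hyC (hxC.trans (SimpleGraph.Adj.reachable ?_))
          rw [deleteEdges_adj]
          exact ⟨h.1, by simpa using h.2⟩
        have hxylow : s(x, y) ∈ lowEdges G w p := by
          rcases hxyK with h | h
          · exact h
          · exact absurd ⟨h.1.1, h.2⟩ hnotTd
        have hwxy : w s(x, y) ≤ p := hxylow.2
        have hfT : s(x, y) ∉ T.edgeSet := by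
          intro h
          exact hnotTd ⟨h, fun hh => absurd (hh ▸ hwxy) (not_le.2 hep)⟩
        have hnr : ¬ (T.deleteEdges {s(a, b)}).Reachable x y :=
          fun h => hyC (hxC.trans h)
        exact exch_contra a b x y heT hxylow.1 hfT hnr (by linarith)
  · -- minimality
    intro S hS
    obtain ⟨hSsub, hSconn, hSmin⟩ := hS
    have hSG : S ⊆ G.edgeSet := fun e he => (hSsub he).1
    set lowT : Set (Sym2 V) := {e ∈ T.edgeSet | w e ≤ p} with hlowT
    set T' : SimpleGraph V := fromEdgeSet (lowT ∪ S) with hT'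
    have hT'le : T' ≤ G := by
      apply fromEdgeSet_le_of_subset
      rintro g (hg | hg)
      · exact hTG hg.1
      · exact hSG hg
    have hlow_reach : ∀ u v, (fromEdgeSet (lowEdges G w p ∪ S)).Adj u v → T'.Reachable u v := by
      intro u v h
      rw [fromEdgeSet_adj] at h
      rcases h.1 with hl | hs
      · exact (stepA u v ((fromEdgeSet_adj _).2 ⟨hl, h.2⟩)).mono
          (fromEdgeSet_mono Set.subset_union_left)
      · exact SimpleGraph.Adj.reachable ((fromEdgeSet_adj _).2 ⟨Or.inr hs, h.2⟩)
    have hT'conn : T'.Connected := by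
      rw [connected_iff]
      exact ⟨fun u v => reachable_of_forall_adj_reachable hlow_reach (hSconn.preconnected u v),
        hSconn.nonempty⟩
    have hT'acyc : T'.IsAcyclic := by
      intro v0 c hc
      by_cases hall : ∀ g ∈ c.edges, g ∈ T.edgeSet
      · exact hTt.IsAcyclic (c.transfer T hall) (hc.transfer hall)
      · push_neg at hall
        obtain ⟨f, hfc, hfTe⟩ := hall
        have hfS : f ∈ S := by
          have := c.edges_subset_edgeSet hfc
          rw [hT', edgeSet_fromEdgeSet] at this
          rcases this.1 with h | h
          · exact absurd h.1 hfTe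
          · exact h
        induction f using Sym2.ind with
        | _ x y =>
          have hreach := (adj_and_reachable_delete_edges_iff_exists_cycle.mpr ⟨v0, c, hc, hfc⟩).2
          have hmono : T' \ fromEdgeSet {s(x, y)} ≤
              fromEdgeSet (lowEdges G w p ∪ (S \ {s(x, y)})) := by
            intro u' v' h
            obtain ⟨h1, h2⟩ := h
            rw [hT', fromEdgeSet_adj] at h1
            have hne2 : s(u', v') ≠ s(x, y) := by
              intro hh
              exact h2 (by rw [fromEdgeSet_adj]; exact ⟨hh, h1.2⟩)
            rw [fromEdgeSet_adj]
            refine ⟨?_, h1.2⟩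
            rcases h1.1 with hl | hs
            · exact Or.inl ⟨hTG hl.1, hl.2⟩
            · exact Or.inr ⟨hs, hne2⟩
          have hreachM : (fromEdgeSet (lowEdges G w p ∪ (S \ {s(x, y)}))).Reachable x y :=
            hreach.mono hmono
          have hMconn : (fromEdgeSet (lowEdges G w p ∪ (S \ {s(x, y)}))).Connected := by
            rw [connected_iff]
            refine ⟨fun u' v' => reachable_of_forall_adj_reachable ?_
              (hSconn.preconnected u' v'), hSconn.nonempty⟩
            intro u' v' h
            rw [fromEdgeSet_adj] at h
            rcases h.1 with hl | hs
            · exact SimpleGraph.Adj.reachable ((fromEdgeSet_adj _).2 ⟨Or.inl hl, h.2⟩)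
            · by_cases hfe : s(u', v') = s(x, y)
              · rw [Sym2.eq_iff] at hfe
                rcases hfe with ⟨rfl, rfl⟩ | ⟨rfl, rfl⟩
                · exact hreachM
                · exact hreachM.symm
              · exact SimpleGraph.Adj.reachable ((fromEdgeSet_adj _).2 ⟨Or.inr ⟨hs, hfe⟩, h.2⟩)
          exact hSmin _ hfS hMconn
    have hsp : IsSpanningTree G T' := ⟨hT'le, ⟨hT'conn, hT'acyc⟩⟩
    have hle := hmin T' hsp
    -- now decompose the sums
    have hsum : ∀ (A B : Set (Sym2 V)), Disjoint A B →
        ∑ e ∈ (A ∪ B).toFinite.toFinset, w e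
          = ∑ e ∈ A.toFinite.toFinset, w e + ∑ e ∈ B.toFinite.toFinset, w e := by
      intro A B hd
      rw [Set.Finite.toFinset_union A.toFinite B.toFinite]
      exact Finset.sum_union (by rwa [Set.Finite.disjoint_toFinset])
    have hdisj1 : Disjoint lowT {e ∈ T.edgeSet | p < w e} := by
      rw [Set.disjoint_left]
      rintro g ⟨-, h1⟩ ⟨-, h2⟩
      exact absurd h1 (not_le.2 h2)
    have hdisj2 : Disjoint lowT S := by
      rw [Set.disjoint_left]
      rintro g ⟨-, h1⟩ h2
      exact absurd h1 (not_le.2 (hSsub h2).2)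
    have hTsplit : T.edgeSet = lowT ∪ {e ∈ T.edgeSet | p < w e} := by
      ext g
      constructor
      · intro h
        rcases le_or_gt (w g) p with h' | h'
        · exact Or.inl ⟨h, h'⟩
        · exact Or.inr ⟨h, h'⟩
      · rintro (h | h) <;> exact h.1
    have hT'edges : T'.edgeSet = lowT ∪ S := by
      rw [hT', edgeSet_fromEdgeSet, sdiff_eq_left]
      rw [Set.disjoint_left]
      rintro g (hg | hg) hd
      · exact (SimpleGraph.not_isDiag_of_mem_edgeSet T hg.1) hd
      · exact (SimpleGraph.not_isDiag_of_mem_edgeSet G (hSG hg)) hd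
    have h1 : graphWeight T w
        = ∑ e ∈ lowT.toFinite.toFinset, w e
          + ∑ e ∈ {e ∈ T.edgeSet | p < w e}.toFinite.toFinset, w e := by
      rw [graphWeight, show T.edgeSet.toFinite.toFinset
        = (lowT ∪ {e ∈ T.edgeSet | p < w e}).toFinite.toFinset from
        Finset.coe_injective (by simp [← hTsplit]), hsum _ _ hdisj1]
    have h2 : graphWeight T' w
        = ∑ e ∈ lowT.toFinite.toFinset, w e + ∑ e ∈ S.toFinite.toFinset, w e := by
      rw [graphWeight, show T'.edgeSet.toFinite.toFinset = (lowT ∪ S).toFinite.toFinset from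
        Finset.coe_injective (by simp [hT'edges]), hsum _ _ hdisj2]
    rw [h1, h2] at hle
    linarith
end

section
/- Let G be a locally finite connected infinite graph with an injective edge labelling U : E(G) → ℝ. Then the wired minimal spanning forest of G equals the union over all vertices x of the invasion percolation tree started at x: WMSF(G,U) = ⋃_{x ∈ V(G)} InvPerc(x). -/
open SimpleGraph

variable {V : Type*}

/-- The vertices spanned by the starting vertex `x` together with a set `S` of edges. -/
def spannedVerts (x : V) (S : Set (Sym2 V)) : Set V := {x} ∪ {v | ∃ e ∈ S, v ∈ e}

/-- The edge boundary of a vertex set `A`: edges of `G` with exactly one endpoint in `A`. -/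
def edgeBoundary (G : SimpleGraph V) (A : Set V) : Set (Sym2 V) :=
  {e | e ∈ G.edgeSet ∧ ∃ a ∈ A, ∃ b ∉ A, e = s(a, b)}

/-- One step of the invasion process: add the boundary edge of smallest label (if it exists). -/
noncomputable def invStep (G : SimpleGraph V) (U : Sym2 V → ℝ) (x : V) (S : Set (Sym2 V)) :
    Set (Sym2 V) :=
  letI := Classical.propDecidable
  if h : ∃ e ∈ edgeBoundary G (spannedVerts x S),
      ∀ f ∈ edgeBoundary G (spannedVerts x S), U e ≤ U f
  then insert h.choose S else S

/-- The invasion tree `T_n` after `n` steps, started at `x`. -/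
noncomputable def invTree (G : SimpleGraph V) (U : Sym2 V → ℝ) (x : V) : ℕ → Set (Sym2 V)
  | 0 => ∅
  | n + 1 => invStep G U x (invTree G U x n)

/-- The invasion percolation tree of `x`: the union of the invasion trees `T_n`. -/
noncomputable def InvPerc (G : SimpleGraph V) (U : Sym2 V → ℝ) (x : V) : Set (Sym2 V) :=
  ⋃ n, invTree G U x n

/-- The wired minimal spanning forest: delete from each cycle, and from each bi-infinite simple
path, the edge with the largest label (if it exists). -/
def WMSF (G : SimpleGraph V) (U : Sym2 V → ℝ) : Set (Sym2 V) :=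
  {e | e ∈ G.edgeSet ∧
    (¬ ∃ (v : V) (c : G.Walk v v), c.IsCycle ∧ e ∈ c.edges ∧
        ∀ f ∈ c.edges, f ≠ e → U f < U e) ∧
    (¬ ∃ γ : ℤ → V, Function.Injective γ ∧ (∀ i, G.Adj (γ i) (γ (i + 1))) ∧
        (∃ i, e = s(γ i, γ (i + 1))) ∧
        ∀ i, s(γ i, γ (i + 1)) ≠ e → U s(γ i, γ (i + 1)) < U e)}


section Aux

variable {V : Type*} {G : SimpleGraph V} {U : Sym2 V → ℝ} {x : V} {A : Set V} {S : Set (Sym2 V)}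

lemma edgeBoundary_subset_edgeSet : edgeBoundary G A ⊆ G.edgeSet := fun _ h => h.1

lemma mem_edgeBoundary_of {a b : V} (hadj : G.Adj a b) (ha : a ∈ A) (hb : b ∉ A) :
    s(a, b) ∈ edgeBoundary G A :=
  ⟨hadj, a, ha, b, hb, rfl⟩

lemma mem_edgeBoundary_of' {a b : V} (hadj : G.Adj a b) (ha : a ∉ A) (hb : b ∈ A) :
    s(a, b) ∈ edgeBoundary G A := by
  rw [Sym2.eq_swap]; exact mem_edgeBoundary_of hadj.symm hb ha

lemma endpoints_mem_spannedVerts {e : Sym2 V} (he : e ∈ S) {v : V} (hv : v ∈ e) :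
    v ∈ spannedVerts x S := Or.inr ⟨e, he, hv⟩

lemma mem_spannedVerts_self : x ∈ spannedVerts x S := Or.inl rfl

lemma edgeBoundary_spanned_disjoint {e : Sym2 V}
    (he : e ∈ edgeBoundary G (spannedVerts x S)) : e ∉ S := by
  obtain ⟨-, a, ha, b, hb, rfl⟩ := he
  exact fun hmem => hb (endpoints_mem_spannedVerts hmem (Sym2.mem_mk_right a b))

/-- Crossing lemma: a walk from inside `A` to outside `A` uses a boundary edge. -/
lemma exists_boundary_edge_of_walk {u v : V} (w : G.Walk u v) (hu : u ∈ A) (hv : v ∉ A) :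
    ∃ f ∈ w.edges, f ∈ edgeBoundary G A := by
  induction w with
  | nil => exact absurd hu hv
  | cons h p ih =>
    rename_i a b c
    by_cases hb : b ∈ A
    · obtain ⟨f, hf1, hf2⟩ := ih hb hv
      exact ⟨f, by simp [hf1], hf2⟩
    · exact ⟨s(a, b), by simp, mem_edgeBoundary_of h hu hb⟩

lemma exists_boundary_edge_of_walk' {u v : V} (w : G.Walk u v) (hu : u ∉ A) (hv : v ∈ A) :
    ∃ f ∈ w.edges, f ∈ edgeBoundary G A := by
  obtain ⟨f, hf1, hf2⟩ := exists_boundary_edge_of_walk w.reverse hv hu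
  exact ⟨f, by simpa using hf1, hf2⟩

lemma subset_invStep : S ⊆ invStep G U x S := by
  unfold invStep
  split <;> simp [Set.subset_insert]

lemma invTree_mono {m n : ℕ} (h : m ≤ n) : invTree G U x m ⊆ invTree G U x n := by
  induction n with
  | zero => simp [Nat.le_zero.mp h]
  | succ n ih =>
    rcases Nat.lt_or_ge m (n+1) with h' | h'
    · exact (ih (Nat.lt_succ_iff.mp h')).trans subset_invStep
    · have : m = n + 1 := le_antisymm h h'
      subst this; rfl

lemma invTree_subset_invPerc (n : ℕ) : invTree G U x n ⊆ InvPerc G U x :=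
  Set.subset_iUnion (fun n => invTree G U x n) n

/-- If an edge is newly added by `invStep`, it is a minimal boundary edge. -/
lemma invStep_new {e : Sym2 V} (he : e ∈ invStep G U x S) (hne : e ∉ S) :
    e ∈ edgeBoundary G (spannedVerts x S) ∧
      ∀ f ∈ edgeBoundary G (spannedVerts x S), U e ≤ U f := by
  unfold invStep at he
  split at he
  · rename_i h
    rcases he with rfl | he
    · exact h.choose_spec
    · exact absurd he hne
  · exact absurd he hne

/-- If the boundary is finite and nonempty, `invStep` adds a new edge. -/
lemma invStep_adds (hfin : (edgeBoundary G (spannedVerts x S)).Finite)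
    (hne : (edgeBoundary G (spannedVerts x S)).Nonempty) :
    ∃ e, e ∈ invStep G U x S ∧ e ∉ S := by
  have h : ∃ e ∈ edgeBoundary G (spannedVerts x S),
      ∀ f ∈ edgeBoundary G (spannedVerts x S), U e ≤ U f := by
    obtain ⟨e, he, hmin⟩ := Set.exists_min_image _ U hfin hne
    exact ⟨e, he, hmin⟩
  refine ⟨h.choose, ?_, edgeBoundary_spanned_disjoint h.choose_spec.1⟩
  unfold invStep
  rw [dif_pos h]
  exact Set.mem_insert _ _

lemma invTree_finite (n : ℕ) : (invTree G U x n).Finite := by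
  induction n with
  | zero => exact Set.finite_empty
  | succ n ih =>
    show (invStep G U x _).Finite
    unfold invStep
    split
    · exact ih.insert _
    · exact ih

lemma spannedVerts_finite (hS : S.Finite) : (spannedVerts x S).Finite := by
  refine (Set.finite_singleton x).union ?_
  have : {v | ∃ e ∈ S, v ∈ e} ⊆ ⋃ e ∈ S, {v | v ∈ e} := by
    intro v ⟨e, he, hv⟩; exact Set.mem_biUnion he hv
  refine Set.Finite.subset (Set.Finite.biUnion hS fun e _ => ?_) this
  induction e with
  | _ a b => exact ((Set.finite_singleton b).insert a).subset (by intro v hv; simpa using hv)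

lemma invTree_subset_edgeSet (n : ℕ) : invTree G U x n ⊆ G.edgeSet := by
  induction n with
  | zero => simp [invTree]
  | succ n ih =>
    intro e he
    by_cases h : e ∈ invTree G U x n
    · exact ih h
    · exact edgeBoundary_subset_edgeSet (invStep_new he h).1

/-- Every spanned vertex is connected to `x` by a walk using invaded edges. -/
lemma exists_walk_to_spanned (n : ℕ) {v : V} (hv : v ∈ spannedVerts x (invTree G U x n)) :
    ∃ w : G.Walk x v, ∀ f ∈ w.edges, f ∈ invTree G U x n := by
  induction n generalizing v with
  | zero =>
    rcases hv with rfl | ⟨e, he, -⟩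
    · exact ⟨Walk.nil, by simp⟩
    · simp [invTree] at he
  | succ n ih =>
    rcases hv with rfl | ⟨e, he, hve⟩
    · exact ⟨Walk.nil, by simp⟩
    · by_cases hold : e ∈ invTree G U x n
      · obtain ⟨w, hw⟩ := ih (Or.inr ⟨e, hold, hve⟩)
        exact ⟨w, fun f hf => invTree_mono (Nat.le_succ n) (hw f hf)⟩
      · obtain ⟨⟨hset, a, ha, b, hb, rfl⟩, -⟩ := invStep_new he hold
        have hadj : G.Adj a b := hset
        obtain ⟨w, hw⟩ := ih ha
        rcases Sym2.mem_iff.mp hve with rfl | rfl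
        · exact ⟨w, fun f hf => invTree_mono (Nat.le_succ n) (hw f hf)⟩
        · refine ⟨w.concat hadj, fun f hf => ?_⟩
          rw [Walk.edges_concat, List.concat_eq_append, List.mem_append,
            List.mem_singleton] at hf
          rcases hf with hf | rfl
          · exact invTree_mono (Nat.le_succ n) (hw f hf)
          · exact he

lemma edgeBoundary_finite (hlf : ∀ v : V, (G.neighborSet v).Finite) (hA : A.Finite) :
    (edgeBoundary G A).Finite := by
  have hsub : edgeBoundary G A ⊆ ⋃ a ∈ A, (fun b => s(a, b)) '' (G.neighborSet a) := by
    rintro e ⟨he, a, ha, b, hb, rfl⟩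
    exact Set.mem_biUnion ha ⟨b, he, rfl⟩
  exact Set.Finite.subset (Set.Finite.biUnion hA fun a _ => (hlf a).image _) hsub

lemma edgeBoundary_nonempty [Infinite V] (hG : G.Connected) (hA : A.Finite) (hx : x ∈ A) :
    (edgeBoundary G A).Nonempty := by
  obtain ⟨v, hv⟩ := hA.infinite_compl.nonempty
  obtain ⟨w⟩ := hG x v
  obtain ⟨f, -, hf⟩ := exists_boundary_edge_of_walk w hx hv
  exact ⟨f, hf⟩

variable [Infinite V]

/-- The invasion never stops: at each step a new edge is added. -/
lemma invTree_strict_growth (hG : G.Connected) (hlf : ∀ v : V, (G.neighborSet v).Finite)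
    (n : ℕ) : ∃ e, e ∈ invTree G U x (n + 1) ∧ e ∉ invTree G U x n := by
  have hfin := edgeBoundary_finite (A := spannedVerts x (invTree G U x n)) hlf
    (spannedVerts_finite (invTree_finite n))
  have hne := edgeBoundary_nonempty (x := x) (A := spannedVerts x (invTree G U x n)) hG
    (spannedVerts_finite (invTree_finite n)) mem_spannedVerts_self
  exact invStep_adds hfin hne

lemma spanned_strict_growth (hG : G.Connected) (hlf : ∀ v : V, (G.neighborSet v).Finite)
    (n : ℕ) : ∃ v, v ∈ spannedVerts x (invTree G U x (n + 1)) ∧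
      v ∉ spannedVerts x (invTree G U x n) := by
  obtain ⟨e, he, hnew⟩ := invTree_strict_growth (U := U) (x := x) hG hlf n
  obtain ⟨-, a, ha, b, hb, rfl⟩ := (invStep_new he hnew).1
  exact ⟨b, endpoints_mem_spannedVerts he (Sym2.mem_mk_right a b), hb⟩

lemma spanned_mono {m n : ℕ} (h : m ≤ n) :
    spannedVerts x (invTree G U x m) ⊆ spannedVerts x (invTree G U x n) := by
  rintro v (rfl | ⟨e, he, hve⟩)
  · exact Or.inl rfl
  · exact Or.inr ⟨e, invTree_mono h he, hve⟩

lemma spanned_card_ge (hG : G.Connected) (hlf : ∀ v : V, (G.neighborSet v).Finite) (n : ℕ) :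
    n ≤ (spannedVerts x (invTree G U x n)).ncard := by
  induction n with
  | zero => exact Nat.zero_le _
  | succ n ih =>
    obtain ⟨v, hv1, hv2⟩ := spanned_strict_growth (U := U) (x := x) hG hlf n
    have hss : spannedVerts x (invTree G U x n) ⊂ spannedVerts x (invTree G U x (n + 1)) :=
      ⟨spanned_mono (Nat.le_succ n), fun hsub => hv2 (hsub hv1)⟩
    have := Set.ncard_lt_ncard hss (spannedVerts_finite (invTree_finite (n + 1)))
    omega

/-- Infinitely many vertices get spanned. -/
lemma spanned_infinite (hG : G.Connected) (hlf : ∀ v : V, (G.neighborSet v).Finite) :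
    (⋃ n, spannedVerts x (invTree G U x n)).Infinite := by
  intro hfin
  have h : ∀ n : ℕ, n ≤ (⋃ n, spannedVerts x (invTree G U x n)).ncard := fun n =>
    (spanned_card_ge (U := U) (x := x) hG hlf n).trans
      (Set.ncard_le_ncard (Set.subset_iUnion (fun n => spannedVerts x (invTree G U x n)) n) hfin)
  exact absurd (h ((⋃ n, spannedVerts x (invTree G U x n)).ncard + 1)) (by omega)

omit [Infinite V] in
lemma exists_stage {e : Sym2 V} (he : e ∈ InvPerc G U x) :
    ∃ n, e ∈ invTree G U x (n + 1) ∧ e ∉ invTree G U x n := by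
  classical
  obtain ⟨m, hm⟩ := Set.mem_iUnion.mp he
  have hex : ∃ n, e ∈ invTree G U x n := ⟨m, hm⟩
  rcases hn : Nat.find hex with _ | k
  · have := Nat.find_spec hex
    rw [hn] at this
    simp [invTree] at this
  · refine ⟨k, ?_, ?_⟩
    · have := Nat.find_spec hex; rwa [hn] at this
    · exact Nat.find_min hex (by omega)

omit [Infinite V] in
/-- Discrete intermediate value: crossing from `¬P` to `P`. -/
lemma int_crossing_up {P : ℤ → Prop} {k i : ℤ} (hk : ¬ P k) (hi : P i) (hki : k ≤ i) :
    ∃ j, k ≤ j ∧ j < i ∧ ¬ P j ∧ P (j + 1) := by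
  refine Int.le_induction (m := k)
    (motive := fun i _ => P i → ∃ j, k ≤ j ∧ j < i ∧ ¬ P j ∧ P (j + 1)) ?_ ?_ i hki hi
  · exact fun h => absurd h hk
  · intro i hki ih hip1
    by_cases h : P i
    · obtain ⟨j, h1, h2, h3, h4⟩ := ih h
      exact ⟨j, h1, by omega, h3, h4⟩
    · exact ⟨i, hki, by omega, h, hip1⟩

omit [Infinite V] in
lemma int_crossing_down {P : ℤ → Prop} {k i : ℤ} (hk : P k) (hi : ¬ P i) (hki : k ≤ i) :
    ∃ j, k ≤ j ∧ j < i ∧ P j ∧ ¬ P (j + 1) := by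
  obtain ⟨j, h1, h2, h3, h4⟩ := int_crossing_up (P := fun j => ¬ P j) (not_not.mpr hk) hi hki
  exact ⟨j, h1, h2, not_not.mp h3, h4⟩

omit [Infinite V] in
/-- An injective `ℤ`-indexed family cannot lie in a finite set on an infinite interval. -/
lemma exists_not_mem_of_injective {γ : ℤ → V} (hinj : Function.Injective γ) {A : Set V}
    (hA : A.Finite) (i : ℤ) : (∃ k, k < i ∧ γ k ∉ A) ∧ (∃ k, i < k ∧ γ k ∉ A) := by
  constructor
  · by_contra h
    push_neg at h
    have hr : Set.range (fun m : ℕ => γ (i - 1 - m)) ⊆ A := by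
      rintro v ⟨m, rfl⟩
      exact h _ (by omega)
    exact Set.infinite_range_of_injective
      (fun m m' hmm => by have := hinj hmm; omega) (hA.subset hr)
  · by_contra h
    push_neg at h
    have hr : Set.range (fun m : ℕ => γ (i + 1 + m)) ⊆ A := by
      rintro v ⟨m, rfl⟩
      exact h _ (by omega)
    exact Set.infinite_range_of_injective
      (fun m m' hmm => by have := hinj hmm; omega) (hA.subset hr)

/-- Direction 1: every invaded edge is in the wired minimal spanning forest. -/
theorem invPerc_subset_wmsf :
    InvPerc G U x ⊆ WMSF G U := by
  classical
  intro e he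
  obtain ⟨n, hen, hnot⟩ := exists_stage he
  obtain ⟨hbd, hmin⟩ := invStep_new hen hnot
  set A := spannedVerts x (invTree G U x n) with hA
  have hAfin : A.Finite := spannedVerts_finite (invTree_finite n)
  obtain ⟨hedge, a, ha, b, hb, rfl⟩ := hbd
  have hadj : G.Adj a b := hedge
  refine ⟨hedge, ?_, ?_⟩
  · -- no cycle in which e is the maximal edge
    rintro ⟨v, c, hc, hec, hmax⟩
    have hasup : a ∈ c.support := Walk.fst_mem_support_of_mem_edges c hec
    set c' := c.rotate a hasup with hc'
    have hrot := c.rotate_edges a hasup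
    have hec' : s(a, b) ∈ c'.edges := hrot.perm.mem_iff.mpr hec
    have hnd : c'.edges.Nodup := hrot.perm.nodup_iff.mpr hc.edges_nodup
    have hbsup : b ∈ c'.support := Walk.snd_mem_support_of_mem_edges c' hec'
    have hspec := c'.take_spec hbsup
    set w1 := c'.takeUntil b hbsup with hw1
    set w2 := c'.dropUntil b hbsup with hw2
    have hedges : c'.edges = w1.edges ++ w2.edges := by
      conv_lhs => rw [← hspec]
      rw [Walk.edges_append]
    have hndisj : ∀ f, f ∈ w1.edges → f ∈ w2.edges → False := by
      rw [hedges] at hnd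
      intro f h1 h2
      exact List.disjoint_of_nodup_append hnd h1 h2
    have hef : ∃ f, f ∈ c'.edges ∧ f ≠ s(a, b) ∧ f ∈ edgeBoundary G A := by
      rw [hedges] at hec'
      rcases List.mem_append.mp hec' with h1 | h2
      · obtain ⟨f, hf1, hf2⟩ := exists_boundary_edge_of_walk' w2 hb ha
        exact ⟨f, by rw [hedges]; exact List.mem_append_right _ hf1,
          fun hfe => hndisj f (hfe ▸ h1) hf1, hf2⟩
      · obtain ⟨f, hf1, hf2⟩ := exists_boundary_edge_of_walk w1 ha hb
        exact ⟨f, by rw [hedges]; exact List.mem_append_left _ hf1,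
          fun hfe => hndisj f hf1 (hfe ▸ h2), hf2⟩
    obtain ⟨f, hfc, hfe, hfb⟩ := hef
    have h1 : U f < U s(a, b) := hmax f (hrot.perm.mem_iff.mp hfc) hfe
    have h2 : U s(a, b) ≤ U f := hmin f hfb
    linarith
  · -- no bi-infinite path in which e is the maximal edge
    rintro ⟨γ, hinj, hadjγ, ⟨i, hei⟩, hmaxp⟩
    have hboth := exists_not_mem_of_injective hinj hAfin
    rcases Sym2.eq_iff.mp hei with ⟨hai, hbi⟩ | ⟨hai, hbi⟩
    · -- γ i = a ∈ A, γ (i+1) = b ∉ A : find a crossing strictly before i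
      obtain ⟨k, hki, hkA⟩ := (hboth i).1
      obtain ⟨j, hj1, hj2, hj3, hj4⟩ :=
        int_crossing_up (P := fun j => γ j ∈ A) hkA (show γ i ∈ A by rw [← hai]; exact ha) hki.le
      have hfb : s(γ j, γ (j + 1)) ∈ edgeBoundary G A :=
        mem_edgeBoundary_of' (hadjγ j) hj3 hj4
      have hfe : s(γ j, γ (j + 1)) ≠ s(a, b) := by
        rw [hei]
        intro hcon
        rcases Sym2.eq_iff.mp hcon with ⟨h1, h2⟩ | ⟨h1, h2⟩
        · exact absurd (hinj h1) (by omega)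
        · have := hinj h1; have := hinj h2; omega
      have h1 : U s(γ j, γ (j + 1)) < U s(a, b) := hmaxp j hfe
      exact absurd (hmin _ hfb) (by linarith)
    · -- γ i = b ∉ A, γ (i+1) = a ∈ A : find a crossing strictly after i+1
      obtain ⟨k, hki, hkA⟩ := (hboth (i + 1)).2
      obtain ⟨j, hj1, hj2, hj3, hj4⟩ :=
        int_crossing_down (P := fun j => γ j ∈ A) (show γ (i+1) ∈ A by rw [← hai]; exact ha) hkA hki.le
      have hfb : s(γ j, γ (j + 1)) ∈ edgeBoundary G A :=
        mem_edgeBoundary_of (hadjγ j) hj3 hj4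
      have hfe : s(γ j, γ (j + 1)) ≠ s(a, b) := by
        rw [hei]
        intro hcon
        rcases Sym2.eq_iff.mp hcon with ⟨h1, h2⟩ | ⟨h1, h2⟩
        · exact absurd (hinj h1) (by omega)
        · have := hinj h1; have := hinj h2; omega
      have h1 : U s(γ j, γ (j + 1)) < U s(a, b) := hmaxp j hfe
      exact absurd (hmin _ hfb) (by linarith)

omit [Infinite V] in
/-- If there is a walk between the endpoints of `e` all of whose edges have smaller
labels, then `e` is not in the WMSF (it is maximal in a cycle). -/
lemma wmsf_no_cheap_walk {a b : V} (hadj : G.Adj a b) (he : s(a, b) ∈ WMSF G U)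
    (w : G.Walk a b) (hlt : ∀ f ∈ w.edges, U f < U s(a, b)) : False := by
  classical
  obtain ⟨-, hcyc, -⟩ := he
  set p := w.reverse.bypass with hp
  have hpsub : ∀ f ∈ p.edges, f ∈ w.edges := by
    intro f hf
    have := w.reverse.edges_bypass_subset hf
    rwa [Walk.edges_reverse, List.mem_reverse] at this
  have hnotin : s(a, b) ∉ p.edges := fun h => lt_irrefl _ (hlt _ (hpsub _ h))
  refine hcyc ⟨a, Walk.cons hadj p, ?_, ?_, ?_⟩
  · exact (Walk.cons_isCycle_iff p hadj).mpr ⟨w.reverse.bypass_isPath, hnotin⟩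
  · simp
  · intro f hf hfe
    rw [Walk.edges_cons, List.mem_cons] at hf
    rcases hf with rfl | hf
    · exact absurd rfl hfe
    · exact hlt f (hpsub f hf)

variable (hU : Set.InjOn U G.edgeSet)

include hU in
omit [Infinite V] in
lemma labels_lt_upto {y : V} (hadj : G.Adj x y) (henot : s(x, y) ∉ InvPerc G U x) (n : ℕ)
    (hy : ∀ k, k < n → y ∉ spannedVerts x (invTree G U x k)) :
    ∀ f ∈ invTree G U x n, U f < U s(x, y) := by
  induction n with
  | zero => simp [invTree]
  | succ n ih =>
    intro f hf
    by_cases hold : f ∈ invTree G U x n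
    · exact ih (fun k hk => hy k (by omega)) f hold
    · obtain ⟨hbd, hmin⟩ := invStep_new hf hold
      have heb : s(x, y) ∈ edgeBoundary G (spannedVerts x (invTree G U x n)) :=
        mem_edgeBoundary_of hadj mem_spannedVerts_self (hy n (by omega))
      have hle : U f ≤ U s(x, y) := hmin _ heb
      have hfe : f ≠ s(x, y) := by
        rintro rfl
        exact henot (invTree_subset_invPerc (n + 1) hf)
      rcases lt_or_eq_of_le hle with h | h
      · exact h
      · exact absurd (hU (edgeBoundary_subset_edgeSet hbd) ((SimpleGraph.mem_edgeSet G).mpr hadj) h) hfe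

include hU in
omit [Infinite V] in
/-- If `e = s(x,y)` is in the WMSF but never invaded from `x`, then `y` is never spanned
by the invasion from `x`. -/
lemma y_not_spanned {y : V} (hwmsf : s(x, y) ∈ WMSF G U) (henot : s(x, y) ∉ InvPerc G U x) :
    ∀ n, y ∉ spannedVerts x (invTree G U x n) := by
  classical
  have hadj : G.Adj x y := hwmsf.1
  by_contra hcon
  push_neg at hcon
  have hex : ∃ n, y ∈ spannedVerts x (invTree G U x n) := hcon
  set n₀ := Nat.find hex with hn₀
  have hyn : y ∈ spannedVerts x (invTree G U x n₀) := Nat.find_spec hex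
  have hylt : ∀ k, k < n₀ → y ∉ spannedVerts x (invTree G U x k) := fun k hk =>
    Nat.find_min hex hk
  obtain ⟨w, hw⟩ := exists_walk_to_spanned n₀ hyn
  have hlt : ∀ f ∈ w.edges, U f < U s(x, y) := by
    intro f hf
    by_cases h : f ∈ invTree G U x n₀
    · exact labels_lt_upto hU hadj henot n₀ hylt f h
    · exact absurd (hw f hf) h
  exact wmsf_no_cheap_walk hadj hwmsf w hlt

include hU in
omit [Infinite V] in
lemma labels_lt_invPerc {y : V} (hadj : G.Adj x y) (henot : s(x, y) ∉ InvPerc G U x)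
    (hy : ∀ n, y ∉ spannedVerts x (invTree G U x n)) :
    ∀ f ∈ InvPerc G U x, U f < U s(x, y) := by
  intro f hf
  obtain ⟨n, hn⟩ := Set.mem_iUnion.mp hf
  exact labels_lt_upto hU hadj henot n (fun k _ => hy k) f hn

include hU in
omit [Infinite V] in
/-- If `e = s(x,y)` is in the WMSF and is invaded from neither endpoint, then the spanned
sets of the two invasions are disjoint. -/
lemma spanned_disjoint {y : V} (hwmsf : s(x, y) ∈ WMSF G U)
    (hex : s(x, y) ∉ InvPerc G U x) (hey : s(x, y) ∉ InvPerc G U y) {v : V} {n m : ℕ}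
    (hvx : v ∈ spannedVerts x (invTree G U x n)) (hvy : v ∈ spannedVerts y (invTree G U y m)) :
    False := by
  have hadj : G.Adj x y := hwmsf.1
  have hyx : s(y, x) = s(x, y) := Sym2.eq_swap
  have hwmsf' : s(y, x) ∈ WMSF G U := hyx ▸ hwmsf
  have hey' : s(y, x) ∉ InvPerc G U y := hyx ▸ hey
  obtain ⟨wx, hwx⟩ := exists_walk_to_spanned n hvx
  obtain ⟨wy, hwy⟩ := exists_walk_to_spanned m hvy
  have hltx := labels_lt_upto hU hadj hex n (fun k _ => y_not_spanned hU hwmsf hex k)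
  have hlty := labels_lt_upto (x := y) hU hadj.symm hey' m
    (fun k _ => y_not_spanned (x := y) hU hwmsf' hey' k)
  refine wmsf_no_cheap_walk hadj hwmsf (wx.append wy.reverse) ?_
  intro f hf
  rw [Walk.edges_append, List.mem_append, Walk.edges_reverse, List.mem_reverse] at hf
  rcases hf with hf | hf
  · exact hltx f (hwx f hf)
  · have := hlty f (hwy f hf)
    rwa [hyx] at this

end Aux

section Ray

variable {V : Type*} {H : SimpleGraph V} {x : V}

/-- The ball of radius `n` around `x`. -/
def ballSet (H : SimpleGraph V) (x : V) : ℕ → Set V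
  | 0 => {x}
  | n + 1 => ballSet H x n ∪ ⋃ u ∈ ballSet H x n, H.neighborSet u

lemma ballSet_finite (hlf : ∀ v : V, (H.neighborSet v).Finite) (n : ℕ) :
    (ballSet H x n).Finite := by
  induction n with
  | zero => exact Set.finite_singleton x
  | succ n ih => exact ih.union (Set.Finite.biUnion ih fun u _ => hlf u)

lemma ballSet_mono_succ (n : ℕ) : ballSet H x n ⊆ ballSet H x (n + 1) :=
  Set.subset_union_left

lemma ballSet_mono {m n : ℕ} (h : m ≤ n) : ballSet H x m ⊆ ballSet H x n := by
  induction n with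
  | zero => simpa [Nat.le_zero.mp h] using Set.Subset.rfl
  | succ n ih =>
    rcases Nat.lt_or_ge m (n + 1) with h' | h'
    · exact (ih (Nat.lt_succ_iff.mp h')).trans (ballSet_mono_succ n)
    · have : m = n + 1 := le_antisymm h h'
      subst this; rfl

lemma ballSet_adj {u : V} (hadj : H.Adj x u) (n : ℕ) :
    ballSet H u n ⊆ ballSet H x (n + 1) := by
  induction n with
  | zero =>
    intro v hv
    rw [Set.mem_singleton_iff.mp hv]
    exact Or.inr (Set.mem_biUnion (Set.mem_singleton x) hadj)
  | succ n ih =>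
    rintro v (hv | hv)
    · exact ballSet_mono_succ (n + 1) (ih hv)
    · obtain ⟨w, hw, hvw⟩ := Set.mem_iUnion₂.mp hv
      exact Or.inr (Set.mem_biUnion (ih hw) hvw)

lemma walk_mem_ballSet {v : V} (w : H.Walk x v) : v ∈ ballSet H x w.length := by
  induction w with
  | nil => exact Set.mem_singleton _
  | cons h p ih => exact ballSet_adj h _ ih

/-- In a locally finite graph whose component of `x` is infinite, there are arbitrarily
long paths from `x`. -/
lemma exists_long_path (hlf : ∀ v : V, (H.neighborSet v).Finite)
    (hinf : {v | H.Reachable x v}.Infinite) (m : ℕ) :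
    ∃ (v : V) (w : H.Walk x v), w.IsPath ∧ m ≤ w.length := by
  classical
  obtain ⟨v, hv1, hv2⟩ := (hinf.diff (ballSet_finite hlf m)).nonempty
  obtain ⟨w₀⟩ := hv1
  refine ⟨v, w₀.bypass, w₀.bypass_isPath, ?_⟩
  by_contra h
  push_neg at h
  exact hv2 (ballSet_mono h.le (walk_mem_ballSet w₀.bypass))

lemma SimpleGraph.Walk.IsPath.getVert_inj {u v : V} {p : H.Walk u v} (hp : p.IsPath) {i j : ℕ}
    (hi : i ≤ p.length) (hj : j ≤ p.length) (h : p.getVert i = p.getVert j) : i = j := by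
  induction p generalizing i j with
  | nil => simp only [Walk.length_nil, Nat.le_zero] at hi hj; omega
  | cons hadj q ih =>
    rw [Walk.cons_isPath_iff] at hp
    match i, j with
    | 0, 0 => rfl
    | 0, j + 1 =>
      exfalso
      refine hp.2 (Walk.mem_support_iff_exists_getVert.mpr ⟨j, h.symm, ?_⟩)
      simpa [Walk.length_cons] using hj
    | i + 1, 0 =>
      exfalso
      refine hp.2 (Walk.mem_support_iff_exists_getVert.mpr ⟨i, h, ?_⟩)
      simpa [Walk.length_cons] using hi
    | i + 1, j + 1 =>
      have := ih hp.1 (by simpa [Walk.length_cons] using hi)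
        (by simpa [Walk.length_cons] using hj) (by simpa [Walk.getVert_cons_succ] using h)
      omega

/-- `f` describes a good path of length `n` from `x`. -/
def GoodFun (H : SimpleGraph V) (x : V) (n : ℕ) (f : ℕ → V) : Prop :=
  f 0 = x ∧ (∀ i, i < n → H.Adj (f i) (f (i + 1))) ∧
    ∀ i, i ≤ n → ∀ j, j ≤ n → f i = f j → i = j

/-- `f` (a good path of length `n`) extends to good paths of every greater length. -/
def ExtendsTo (H : SimpleGraph V) (x : V) (n : ℕ) (f : ℕ → V) : Prop :=
  ∀ m, n ≤ m → ∃ g, GoodFun H x m g ∧ ∀ i, i ≤ n → g i = f i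

lemma GoodFun.mono {n m : ℕ} {f : ℕ → V} (h : GoodFun H x n f) (hmn : m ≤ n) :
    GoodFun H x m f := by
  refine ⟨h.1, ?_, ?_⟩
  · intro i hi
    exact h.2.1 i (by omega)
  · intro i hi j hj
    exact h.2.2 i (by omega) j (by omega)

lemma GoodFun.congr {n : ℕ} {f g : ℕ → V} (h : GoodFun H x n f)
    (hfg : ∀ i, i ≤ n → g i = f i) : GoodFun H x n g := by
  refine ⟨by rw [hfg 0 (by omega)]; exact h.1, fun i hi => ?_, fun i hi j hj hij => ?_⟩
  · rw [hfg i (by omega), hfg (i + 1) (by omega)]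
    exact h.2.1 i hi
  · exact h.2.2 i hi j hj (by rwa [hfg i hi, hfg j hj] at hij)

lemma goodFun_exists (hlf : ∀ v : V, (H.neighborSet v).Finite)
    (hinf : {v | H.Reachable x v}.Infinite) (m : ℕ) : ∃ g, GoodFun H x m g := by
  obtain ⟨v, w, hw, hlen⟩ := exists_long_path hlf hinf m
  refine ⟨w.getVert, w.getVert_zero, fun i hi => w.adj_getVert_succ (by omega),
    fun i hi j hj hij => hw.getVert_inj (by omega) (by omega) hij⟩

lemma extendsTo_step (hlf : ∀ v : V, (H.neighborSet v).Finite) {n : ℕ} {f : ℕ → V}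
    (hg : GoodFun H x n f) (he : ExtendsTo H x n f) :
    ∃ f', GoodFun H x (n + 1) f' ∧ ExtendsTo H x (n + 1) f' ∧ ∀ i, i ≤ n → f' i = f i := by
  classical
  set M : V → Set ℕ := fun a =>
    {m | n + 1 ≤ m ∧ ∃ g, GoodFun H x m g ∧ (∀ i, i ≤ n → g i = f i) ∧ g (n + 1) = a} with hM
  have hcover : Set.Ici (n + 1) ⊆ ⋃ a ∈ H.neighborSet (f n), M a := by
    intro m hm
    have hm' : n + 1 ≤ m := hm
    obtain ⟨g, hgood, hagree⟩ := he m (by omega)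
    have hadj : H.Adj (f n) (g (n + 1)) := by
      rw [← hagree n (le_refl n)]
      exact hgood.2.1 n (by omega)
    exact Set.mem_biUnion hadj ⟨hm', g, hgood, hagree, rfl⟩
  have : ∃ a ∈ H.neighborSet (f n), (M a).Infinite := by
    by_contra hcon
    push_neg at hcon
    exact Set.Ici_infinite _ ((Set.Finite.biUnion (hlf (f n)) hcon).subset hcover)
  obtain ⟨a, -, hMa⟩ := this
  obtain ⟨m₀, hm₀⟩ := hMa.nonempty
  obtain ⟨hm₀n, g₀, hg₀good, hg₀agree, hg₀a⟩ := hm₀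
  refine ⟨g₀, hg₀good.mono hm₀n, ?_, hg₀agree⟩
  intro m hm
  obtain ⟨m', hm'M, hmm'⟩ := hMa.exists_gt m
  obtain ⟨hm'n, g, hggood, hgagree, hga⟩ := hm'M
  refine ⟨g, hggood.mono (by omega), fun i hi => ?_⟩
  rcases Nat.lt_or_ge i (n + 1) with hi' | hi'
  · rw [hgagree i (by omega), hg₀agree i (by omega)]
  · have : i = n + 1 := by omega
    subst this
    rw [hga, hg₀a]

/-- König's lemma: a locally finite graph with infinite component of `x` contains an
injective ray starting at `x`. -/
lemma exists_ray (hlf : ∀ v : V, (H.neighborSet v).Finite)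
    (hinf : {v | H.Reachable x v}.Infinite) :
    ∃ γ : ℕ → V, γ 0 = x ∧ Function.Injective γ ∧ ∀ n, H.Adj (γ n) (γ (n + 1)) := by
  classical
  -- the recursive construction
  have hnext : ∀ (n : ℕ) (fn : ℕ → V), ∃ fn' : ℕ → V,
      (GoodFun H x n fn ∧ ExtendsTo H x n fn) →
        (GoodFun H x (n + 1) fn' ∧ ExtendsTo H x (n + 1) fn' ∧ ∀ i, i ≤ n → fn' i = fn i) := by
    intro n fn
    by_cases h : GoodFun H x n fn ∧ ExtendsTo H x n fn
    · obtain ⟨f', h1, h2, h3⟩ := extendsTo_step hlf h.1 h.2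
      exact ⟨f', fun _ => ⟨h1, h2, h3⟩⟩
    · exact ⟨fn, fun hcon => absurd hcon h⟩
  choose next hnextspec using hnext
  let F : ℕ → (ℕ → V) := fun n => Nat.rec (fun _ => x) next n
  have hbase : GoodFun H x 0 (F 0) ∧ ExtendsTo H x 0 (F 0) := by
    constructor
    · exact ⟨rfl, fun i hi => by omega, fun i hi j hj _ => by omega⟩
    · intro m hm
      obtain ⟨g, hgood⟩ := goodFun_exists hlf hinf m
      refine ⟨g, hgood, fun i hi => ?_⟩
      have : i = 0 := by omega
      subst this
      exact hgood.1
  have hstep : ∀ n, (GoodFun H x n (F n) ∧ ExtendsTo H x n (F n)) →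
      (GoodFun H x (n + 1) (F (n + 1)) ∧ ExtendsTo H x (n + 1) (F (n + 1))) ∧
        ∀ i, i ≤ n → F (n + 1) i = F n i := by
    intro n h
    have hF : F (n + 1) = next n (F n) := rfl
    rw [hF]
    obtain ⟨h1, h2, h3⟩ := hnextspec n (F n) h
    exact ⟨⟨h1, h2⟩, h3⟩
  have hinv : ∀ n, GoodFun H x n (F n) ∧ ExtendsTo H x n (F n) := by
    intro n
    induction n with
    | zero => exact hbase
    | succ n ih => exact (hstep n ih).1
  have hagree : ∀ n, ∀ i, i ≤ n → F (n + 1) i = F n i := fun n => (hstep n (hinv n)).2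
  have hagree' : ∀ m n, n ≤ m → ∀ i, i ≤ n → F m i = F n i := by
    intro m
    induction m with
    | zero => intro n hn i hi; rw [Nat.le_zero.mp hn]
    | succ m ih =>
      intro n hn i hi
      rcases Nat.lt_or_ge n (m + 1) with h' | h'
      · rw [hagree m i (by omega), ih n (by omega) i hi]
      · have : n = m + 1 := by omega
        subst this; rfl
  refine ⟨fun n => F n n, (hinv 0).1.1, ?_, ?_⟩
  · intro i j hij
    have hij' : F i i = F j j := hij
    rcases Nat.le_total i j with h | h
    · rw [← hagree' j i h i (le_refl i)] at hij'
      exact (hinv j).1.2.2 i (by omega) j (le_refl j) hij'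
    · rw [← hagree' i j h j (le_refl j)] at hij'
      exact ((hinv i).1.2.2 i (le_refl i) j (by omega) hij')
  · intro n
    have h1 : F (n + 1) n = F n n := hagree n n (le_refl n)
    have h2 := (hinv (n + 1)).1.2.1 n (by omega)
    rwa [h1] at h2

end Ray

section Aux2

set_option linter.unusedSectionVars false

variable {V : Type*} [Infinite V] {G : SimpleGraph V} {U : Sym2 V → ℝ} {x : V}
variable (hU : Set.InjOn U G.edgeSet)

lemma walk_end_mem_edge {G' : SimpleGraph V} {a v : V} (w : G'.Walk a v) :
    v = a ∨ ∃ e ∈ w.edges, v ∈ e := by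
  induction w with
  | nil => exact Or.inl rfl
  | @cons b c d h p ih =>
    rcases ih with rfl | ⟨e, he, hve⟩
    · exact Or.inr ⟨s(b, d), by simp, Sym2.mem_mk_right _ _⟩
    · exact Or.inr ⟨e, by simp [he], hve⟩

/-- The graph formed by the invasion tree of `x`. -/
def auxH (G : SimpleGraph V) (U : Sym2 V → ℝ) (x : V) : SimpleGraph V :=
  SimpleGraph.fromEdgeSet (InvPerc G U x) ⊓ G

lemma auxH_adj {a b : V} : (auxH G U x).Adj a b ↔ s(a, b) ∈ InvPerc G U x ∧ G.Adj a b := by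
  constructor
  · rintro ⟨⟨h1, -⟩, h2⟩
    exact ⟨h1, h2⟩
  · rintro ⟨h1, h2⟩
    exact ⟨⟨h1, h2.ne⟩, h2⟩

lemma auxH_le : auxH G U x ≤ G := inf_le_right

lemma auxH_lf (hlf : ∀ v : V, (G.neighborSet v).Finite) :
    ∀ v : V, ((auxH G U x).neighborSet v).Finite :=
  fun v => (hlf v).subset fun u hu => (auxH_adj.mp hu).2

lemma invPerc_subset_edgeSet : InvPerc G U x ⊆ G.edgeSet := by
  intro e he
  obtain ⟨n, hn⟩ := Set.mem_iUnion.mp he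
  exact invTree_subset_edgeSet n hn

lemma mem_auxH_edgeSet {f : Sym2 V} (h1 : f ∈ InvPerc G U x) : f ∈ (auxH G U x).edgeSet := by
  have h2 : f ∈ G.edgeSet := invPerc_subset_edgeSet h1
  induction f with
  | _ a b => exact auxH_adj.mpr ⟨h1, h2⟩

lemma auxH_edge_mem {f : Sym2 V} (h : f ∈ (auxH G U x).edgeSet) : f ∈ InvPerc G U x := by
  induction f with
  | _ a b => exact (auxH_adj.mp h).1

lemma auxH_reach_spanned {v : V} (h : (auxH G U x).Reachable x v) :
    ∃ n, v ∈ spannedVerts x (invTree G U x n) := by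
  obtain ⟨w⟩ := h
  rcases walk_end_mem_edge w with rfl | ⟨e, he, hve⟩
  · exact ⟨0, mem_spannedVerts_self⟩
  · have := auxH_edge_mem (w.edges_subset_edgeSet he)
    obtain ⟨n, hn⟩ := Set.mem_iUnion.mp this
    exact ⟨n, endpoints_mem_spannedVerts hn hve⟩

lemma auxH_reach_infinite (hG : G.Connected) (hlf : ∀ v : V, (G.neighborSet v).Finite) :
    {v | (auxH G U x).Reachable x v}.Infinite := by
  refine (spanned_infinite (U := U) (x := x) hG hlf).mono ?_
  intro v hv
  obtain ⟨n, hn⟩ := Set.mem_iUnion.mp hv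
  obtain ⟨w, hw⟩ := exists_walk_to_spanned n hn
  exact ⟨w.transfer (auxH G U x) fun e he =>
    mem_auxH_edgeSet (invTree_subset_invPerc n (hw e he))⟩

include hU in
/-- Direction 2: every WMSF edge is invaded from one of its endpoints. -/
theorem wmsf_subset_union_invPerc (hG : G.Connected) (hlf : ∀ v : V, (G.neighborSet v).Finite)
    {e : Sym2 V} (he : e ∈ WMSF G U) : e ∈ ⋃ z : V, InvPerc G U z := by
  classical
  by_contra hnot
  induction e with
  | _ a b =>
  have hadj : G.Adj a b := he.1
  have hea : s(a, b) ∉ InvPerc G U a := fun h => hnot (Set.mem_iUnion.mpr ⟨a, h⟩)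
  have heb : s(a, b) ∉ InvPerc G U b := fun h => hnot (Set.mem_iUnion.mpr ⟨b, h⟩)
  have hba : s(b, a) = s(a, b) := Sym2.eq_swap
  have hwmsf' : s(b, a) ∈ WMSF G U := hba ▸ he
  have heb' : s(b, a) ∉ InvPerc G U b := hba ▸ heb
  -- label bounds
  have hanot := y_not_spanned (x := a) hU he hea
  have hbnot := y_not_spanned (x := b) hU hwmsf' heb'
  have hlta : ∀ f ∈ InvPerc G U a, U f < U s(a, b) :=
    labels_lt_invPerc hU hadj hea hanot
  have hltb : ∀ f ∈ InvPerc G U b, U f < U s(a, b) := by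
    intro f hf
    have := labels_lt_invPerc (x := b) hU hadj.symm heb' hbnot f hf
    rwa [hba] at this
  -- rays in the two invasion trees
  obtain ⟨γa, hγa0, hγainj, hγaadj⟩ :=
    exists_ray (H := auxH G U a) (auxH_lf hlf) (auxH_reach_infinite hG hlf)
  obtain ⟨γb, hγb0, hγbinj, hγbadj⟩ :=
    exists_ray (H := auxH G U b) (auxH_lf hlf) (auxH_reach_infinite hG hlf)
  have hγaE : ∀ k, s(γa k, γa (k + 1)) ∈ InvPerc G U a := fun k => (auxH_adj.mp (hγaadj k)).1
  have hγbE : ∀ k, s(γb k, γb (k + 1)) ∈ InvPerc G U b := fun k => (auxH_adj.mp (hγbadj k)).1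
  have hγareach : ∀ k, (auxH G U a).Reachable a (γa k) := by
    intro k
    induction k with
    | zero => rw [hγa0]
    | succ k ih => exact ih.trans (hγaadj k).reachable
  have hγbreach : ∀ k, (auxH G U b).Reachable b (γb k) := by
    intro k
    induction k with
    | zero => rw [hγb0]
    | succ k ih => exact ih.trans (hγbadj k).reachable
  have hγaspan : ∀ k, ∃ n, γa k ∈ spannedVerts a (invTree G U a n) :=
    fun k => auxH_reach_spanned (hγareach k)
  have hγbspan : ∀ k, ∃ n, γb k ∈ spannedVerts b (invTree G U b n) :=
    fun k => auxH_reach_spanned (hγbreach k)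
  have hdisj : ∀ k m, γa k = γb m → False := by
    intro k m hkm
    obtain ⟨n1, hn1⟩ := hγaspan k
    obtain ⟨n2, hn2⟩ := hγbspan m
    rw [hkm] at hn1
    exact spanned_disjoint hU he hea heb hn1 hn2
  -- the bi-infinite path
  set γ : ℤ → V := fun i => if i ≤ 0 then γa (-i).toNat else γb (i - 1).toNat with hγ
  have hγneg : ∀ i : ℤ, i ≤ 0 → γ i = γa (-i).toNat := by
    intro i hi
    show (if i ≤ 0 then γa (-i).toNat else γb (i - 1).toNat) = γa (-i).toNat
    rw [if_pos hi]
  have hγpos : ∀ i : ℤ, 1 ≤ i → γ i = γb (i - 1).toNat := by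
    intro i hi
    show (if i ≤ 0 then γa (-i).toNat else γb (i - 1).toNat) = γb (i - 1).toNat
    rw [if_neg (show ¬ i ≤ 0 by omega)]
  have hγ0 : γ 0 = a := by rw [hγneg 0 le_rfl]; simpa using hγa0
  have hγ1 : γ 1 = b := by rw [hγpos 1 le_rfl]; simpa using hγb0
  refine he.2.2 ⟨γ, ?_, ?_, ⟨0, by rw [zero_add, hγ0, hγ1]⟩, ?_⟩
  · -- injectivity
    intro i j hij
    rcases le_or_gt i 0 with hi | hi <;> rcases le_or_gt j 0 with hj | hj
    · rw [hγneg i hi, hγneg j hj] at hij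
      have := hγainj hij
      omega
    · rw [hγneg i hi, hγpos j (by omega)] at hij
      exact absurd (hdisj _ _ hij) (fun h => h)
    · rw [hγpos i (by omega), hγneg j hj] at hij
      exact absurd (hdisj _ _ hij.symm) (fun h => h)
    · rw [hγpos i (by omega), hγpos j (by omega)] at hij
      have := hγbinj hij
      omega
  · -- adjacency
    intro i
    rcases lt_trichotomy i 0 with hi | rfl | hi
    · rw [hγneg i (by omega), hγneg (i + 1) (by omega)]
      have hk : (-i).toNat = (-(i + 1)).toNat + 1 := by omega
      rw [hk]
      exact (auxH_le (hγaadj (-(i + 1)).toNat)).symm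
    · rw [zero_add, hγ0, hγ1]
      exact hadj
    · rw [hγpos i (by omega), hγpos (i + 1) (by omega)]
      have hk : (i + 1 - 1).toNat = (i - 1).toNat + 1 := by omega
      rw [hk]
      exact auxH_le (hγbadj (i - 1).toNat)
  · -- maximality
    intro i hne
    rcases lt_trichotomy i 0 with hi | rfl | hi
    · rw [hγneg i (by omega), hγneg (i + 1) (by omega)]
      have hk : (-i).toNat = (-(i + 1)).toNat + 1 := by omega
      rw [hk, Sym2.eq_swap]
      exact hlta _ (hγaE (-(i + 1)).toNat)
    · exact absurd (by rw [zero_add, hγ0, hγ1]) hne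
    · rw [hγpos i (by omega), hγpos (i + 1) (by omega)]
      have hk : (i + 1 - 1).toNat = (i - 1).toNat + 1 := by omega
      rw [hk]
      exact hltb _ (hγbE (i - 1).toNat)

end Aux2

/-- On a locally finite connected infinite graph with injective edge labels, the wired minimal
spanning forest is the union of the invasion percolation trees of all vertices. -/
theorem wmsf_eq_union_invPerc [Infinite V] (G : SimpleGraph V) (hG : G.Connected)
    (hlf : ∀ v : V, (G.neighborSet v).Finite)
    (U : Sym2 V → ℝ) (hU : Set.InjOn U G.edgeSet) :
    WMSF G U = ⋃ x : V, InvPerc G U x := by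
  apply Set.Subset.antisymm
  · intro e he
    exact wmsf_subset_union_invPerc hU hG hlf he
  · intro e he
    obtain ⟨x, hx⟩ := Set.mem_iUnion.mp he
    exact invPerc_subset_wmsf hx
end

section
/- Let G be a finite connected planar graph embedded in the plane (or torus) with injective edge weights w, and let G* be its planar dual with the dual edge e* given weight w(e). Then the edges dual to the complement of the minimal spanning tree of G form the maximal spanning tree of G*: e ∈ MST(G, w) if and only if e* ∉ MaxST(G*, w). -/
open SimpleGraph

variable {V : Type*}

private lemma edges_mapLe {G G' : SimpleGraph V} (h : G ≤ G') {u v : V} (p : G.Walk u v) :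
    (p.mapLe h).edges = p.edges := by
  have hid : ⇑(Hom.ofLE h) = id := rfl
  simp [Walk.mapLe, Walk.edges_map, hid, Sym2.map_id, List.map_id]

private lemma preconnected_delete_edge {G : SimpleGraph V} (hG : G.Preconnected) {x y : V}
    (hr : (G \ fromEdgeSet {s(x, y)}).Reachable x y) :
    (G \ fromEdgeSet {s(x, y)}).Preconnected := by
  intro u v
  obtain ⟨p⟩ := hG u v
  induction p with
  | nil => exact Reachable.refl _
  | @cons u u' v h q ih =>
    refine Reachable.trans ?_ ih
    by_cases he : s(u, u') = s(x, y)
    · rcases Sym2.eq_iff.mp he with ⟨rfl, rfl⟩ | ⟨rfl, rfl⟩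
      · exact hr
      · exact hr.symm
    · exact Adj.reachable (by simp [h, he, h.ne])

private lemma swap_isTree {T' : SimpleGraph V} (hT' : T'.IsTree) {a b : V}
    (hna : ¬ T'.Adj a b) (hab : a ≠ b)
    (p : T'.Walk a b) (hp : p.IsPath) (f : Sym2 V) (hf : f ∈ p.edges) :
    ((T' ⊔ fromEdgeSet {s(a, b)}).deleteEdges {f}).IsTree := by
  classical
  set H := T' ⊔ fromEdgeSet {s(a, b)} with hH
  have hHpre : H.Preconnected := (hT'.isConnected.mono le_sup_left).preconnected
  have hadj : H.Adj a b := by simp [hH, hab]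
  have hq : (p.mapLe (le_sup_left : T' ≤ H)).IsPath :=
    Walk.map_isPath_of_injective (fun u v h => h) hp
  have hqe : (p.mapLe (le_sup_left : T' ≤ H)).edges = p.edges := edges_mapLe _ p
  have hcyc : (Walk.cons hadj.symm (p.mapLe le_sup_left)).IsCycle := by
    apply Path.cons_isCycle ⟨_, hq⟩ hadj.symm
    rw [hqe, Sym2.eq_swap]
    intro hmem
    exact hna (p.edges_subset_edgeSet hmem)
  have hfc : f ∈ (Walk.cons hadj.symm (p.mapLe le_sup_left)).edges := by
    rw [Walk.edges_cons, hqe]; exact List.mem_cons_of_mem _ hf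
  revert hfc hf
  induction f using Sym2.ind with
  | _ x y =>
  intro hf hfc
  have hxy : x ≠ y := (p.adj_of_mem_edges hf).ne
  constructor
  · -- connected
    have hr : (H \ fromEdgeSet {s(x, y)}).Reachable x y :=
      (adj_and_reachable_delete_edges_iff_exists_cycle.mpr ⟨b, _, hcyc, hfc⟩).2
    haveI := hT'.isConnected.nonempty
    exact ⟨preconnected_delete_edge hHpre hr⟩
  · -- acyclic
    intro u c' hc'
    by_cases hec : s(a, b) ∈ c'.edges
    · -- cycle through e gives a path from a to b in T' avoiding f
      have hr : ((H.deleteEdges {s(x, y)}) \ fromEdgeSet {s(a, b)}).Reachable a b :=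
        (adj_and_reachable_delete_edges_iff_exists_cycle.mpr ⟨u, c', hc', hec⟩).2
      have hle : (H.deleteEdges {s(x, y)}) \ fromEdgeSet {s(a, b)} ≤ T' \ fromEdgeSet {s(x, y)} := by
        intro u' v' h'
        rw [sdiff_adj] at h' ⊢
        rw [deleteEdges_adj] at h'
        obtain ⟨⟨hH', hnf⟩, hnab⟩ := h'
        constructor
        · rcases (sup_adj _ _ _ _).mp hH' with h1 | h1
          · exact h1
          · exact absurd h1 hnab
        · rw [fromEdgeSet_adj]
          rintro ⟨heq, -⟩
          exact hnf (by simpa using heq)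
      obtain ⟨q0⟩ := hr.mono hle
      have hq1 : s(x, y) ∉ (q0.mapLe (sdiff_le : T' \ fromEdgeSet {s(x, y)} ≤ T')).edges := by
        rw [edges_mapLe]
        intro hmem
        have h2 := q0.edges_subset_edgeSet hmem
        simp [hxy] at h2
      have huniq := hT'.IsAcyclic.path_unique ((q0.mapLe sdiff_le).toPath) ⟨p, hp⟩
      have hmem : s(x, y) ∈ ((q0.mapLe sdiff_le).toPath : T'.Walk a b).edges := by
        rw [huniq]; exact hf
      exact hq1 (Walk.edges_toPath_subset _ hmem)
    · -- cycle avoiding e lies in T'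
      have hsub : ∀ e' ∈ c'.edges, e' ∈ T'.edgeSet := by
        intro e' he'
        have h1 := c'.edges_subset_edgeSet he'
        simp only [edgeSet_deleteEdges, hH, edgeSet_sup, edgeSet_fromEdgeSet] at h1
        rcases h1.1 with h2 | h2
        · exact h2
        · exact absurd (h2.1 ▸ he' : s(a, b) ∈ c'.edges) hec
      exact hT'.IsAcyclic (c'.transfer T' hsub) (hc'.transfer hsub)

private lemma gw_eq_sum [Fintype V] (T : SimpleGraph V) (w : Sym2 V → ℝ)
    (s : Finset (Sym2 V)) (hs : ↑s = T.edgeSet) :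
    graphWeight T w = ∑ e ∈ s, w e := by
  unfold graphWeight
  congr 1
  apply Finset.coe_injective
  rw [Set.Finite.coe_toFinset, hs]

private lemma exchange_contra [Fintype V] (G : SimpleGraph V) (w : Sym2 V → ℝ)
    (hw : Set.InjOn w G.edgeSet) (T T' : SimpleGraph V)
    (hT : IsSpanningTree G T) (hT' : IsMST G w T')
    (e : Sym2 V) (he : e ∈ T.edgeSet) (he' : e ∉ T'.edgeSet)
    (hmin : ∀ f ∈ T'.edgeSet, f ∉ T.edgeSet → w e ≤ w f) : False := by
  classical
  revert he he' hmin
  induction e using Sym2.ind with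
  | _ a b =>
  intro he he' hmin
  have hTab : T.Adj a b := he
  have hab : a ≠ b := hTab.ne
  have hna : ¬ T'.Adj a b := he'
  obtain ⟨p, hp, -⟩ := hT'.1.2.existsUnique_path a b
  -- find an edge of p not in T
  have hex : ∃ f ∈ p.edges, f ∉ T.edgeSet := by
    by_contra hcon
    push_neg at hcon
    have huniq := hT.2.IsAcyclic.path_unique ((p.transfer T hcon).toPath)
      (Path.singleton hTab)
    have : s(a, b) ∈ ((p.transfer T hcon).toPath : T.Walk a b).edges := by
      rw [huniq]; exact Path.mk'_mem_edges_singleton hTab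
    have h2 : s(a, b) ∈ (p.transfer T hcon).edges := Walk.edges_toPath_subset _ this
    rw [Walk.edges_transfer] at h2
    exact he' (p.edges_subset_edgeSet h2)
  obtain ⟨f, hfp, hfT⟩ := hex
  have hfT' : f ∈ T'.edgeSet := p.edges_subset_edgeSet hfp
  have hfe : f ≠ s(a, b) := fun h => he' (h ▸ hfT')
  have hwlt : w s(a, b) < w f := by
    refine lt_of_le_of_ne (hmin f hfT' hfT) fun h => hfe (hw ?_ ?_ h).symm
    · exact edgeSet_subset_edgeSet.mpr hT.1 he
    · exact edgeSet_subset_edgeSet.mpr hT'.1.1 hfT'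
  -- the swapped tree
  set T'' := (T' ⊔ fromEdgeSet {s(a, b)}).deleteEdges {f} with hT''
  have htree : T''.IsTree := swap_isTree hT'.1.2 hna hab p hp f hfp
  have hle : T'' ≤ G := by
    intro u v h
    rw [hT'', deleteEdges_adj] at h
    rcases (sup_adj _ _ _ _).mp h.1 with h1 | h1
    · exact hT'.1.1 h1
    · rw [fromEdgeSet_adj] at h1
      rcases Sym2.eq_iff.mp h1.1 with ⟨rfl, rfl⟩ | ⟨rfl, rfl⟩
      · exact hT.1 hTab
      · exact hT.1 hTab.symm
  -- edge set of T''
  have hndiag : ¬ (s(a, b) : Sym2 V).IsDiag := by simp [hab]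
  have hsing : ({s(a, b)} : Set (Sym2 V)) \ {e : Sym2 V | e.IsDiag} = {s(a, b)} := by
    ext e'
    constructor
    · exact fun h => h.1
    · intro h
      refine ⟨h, fun h2 => ?_⟩
      rw [Set.mem_singleton_iff] at h
      subst h
      exact hndiag h2
  have hE : T''.edgeSet = (T'.edgeSet ∪ {s(a, b)}) \ {f} := by
    rw [hT'', edgeSet_deleteEdges, edgeSet_sup, edgeSet_fromEdgeSet, Sym2.diagSet_eq_setOfPred_isDiag, hsing]
  -- weight computation
  set s' : Finset (Sym2 V) := T'.edgeSet.toFinite.toFinset with hs'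
  have hes' : s(a, b) ∉ s' := by rw [hs', Set.Finite.mem_toFinset]; exact he'
  have hfs' : f ∈ insert s(a, b) s' := by
    rw [Finset.mem_insert, hs', Set.Finite.mem_toFinset]
    exact Or.inr hfT'
  have hgw'' : graphWeight T'' w = ∑ x ∈ (insert s(a, b) s').erase f, w x := by
    apply gw_eq_sum
    rw [Finset.coe_erase, Finset.coe_insert, hE, Set.union_singleton, hs',
      Set.Finite.coe_toFinset]
  have hgw' : graphWeight T' w = ∑ x ∈ s', w x := gw_eq_sum _ _ _ (by rw [hs', Set.Finite.coe_toFinset])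
  have hsum : graphWeight T'' w = graphWeight T' w + w s(a, b) - w f := by
    rw [hgw'', hgw', Finset.sum_erase_eq_sub hfs', Finset.sum_insert hes']
    ring
  have := hT'.2 T'' ⟨hle, htree⟩
  linarith

private lemma mst_unique [Fintype V] {G : SimpleGraph V} {w : Sym2 V → ℝ}
    (hw : Set.InjOn w G.edgeSet) {T T' : SimpleGraph V}
    (hT : IsMST G w T) (hT' : IsMST G w T') : T = T' := by
  classical
  by_contra hne
  set sT := T.edgeSet.toFinite.toFinset with hsT
  set sT' := T'.edgeSet.toFinite.toFinset with hsT'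
  set D := (sT \ sT') ∪ (sT' \ sT) with hD
  have hDne : D.Nonempty := by
    rw [Finset.nonempty_iff_ne_empty]
    intro h
    apply hne
    rw [← edgeSet_inj]
    have heq : sT = sT' := by
      have h1 := Finset.sdiff_eq_empty_iff_subset.mp (Finset.union_eq_empty.mp h).1
      have h2 := Finset.sdiff_eq_empty_iff_subset.mp (Finset.union_eq_empty.mp h).2
      exact le_antisymm h1 h2
    rw [← Set.Finite.coe_toFinset T.edgeSet.toFinite,
      ← Set.Finite.coe_toFinset T'.edgeSet.toFinite]
    rw [hsT, hsT'] at heq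
    rw [heq]
  obtain ⟨e, heD, hemin⟩ := D.exists_min_image w hDne
  rw [hD, Finset.mem_union] at heD
  rcases heD with h | h
  · rw [Finset.mem_sdiff] at h
    simp only [hsT, hsT', Set.Finite.mem_toFinset] at h
    refine exchange_contra G w hw T T' hT.1 hT' e h.1 h.2 fun f hf1 hf2 => ?_
    refine hemin f ?_
    simp only [hD, Finset.mem_union, Finset.mem_sdiff, hsT, hsT', Set.Finite.mem_toFinset]
    exact Or.inr ⟨hf1, hf2⟩
  · rw [Finset.mem_sdiff] at h
    simp only [hsT, hsT', Set.Finite.mem_toFinset] at h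
    refine exchange_contra G w hw T' T hT'.1 hT e h.1 h.2 fun f hf1 hf2 => ?_
    refine hemin f ?_
    simp only [hD, Finset.mem_union, Finset.mem_sdiff, hsT, hsT', Set.Finite.mem_toFinset]
    exact Or.inl ⟨hf1, hf2⟩

/-- Planar duality for minimal spanning trees: if `G` and `G'` are plane duals, with dual edges
carrying the same weight, then an edge belongs to the minimal spanning tree of `G` iff its dual
edge does not belong to the maximal spanning tree of `G'`. The duality of the two embedded
graphs is encoded by a bijection `φ` between the edge sets under which the complements of
spanning trees of `G` correspond exactly to spanning trees of `G'`. -/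
theorem mst_dual_maxst {V' : Type*} [Fintype V] [Fintype V']
    (G : SimpleGraph V) (G' : SimpleGraph V') (hG : G.Connected) (hG' : G'.Connected)
    (φ : Sym2 V → Sym2 V') (hφ : Set.BijOn φ G.edgeSet G'.edgeSet)
    (hdual : ∀ T : SimpleGraph V, T ≤ G →
      (IsSpanningTree G T ↔
        IsSpanningTree G' (SimpleGraph.fromEdgeSet (φ '' (G.edgeSet \ T.edgeSet)))))
    (w : Sym2 V → ℝ) (hw : Set.InjOn w G.edgeSet)
    (w' : Sym2 V' → ℝ) (hw' : Set.InjOn w' G'.edgeSet)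
    (hww' : ∀ e ∈ G.edgeSet, w' (φ e) = w e)
    (T : SimpleGraph V) (hT : IsMST G w T)
    (Td : SimpleGraph V') (hTd : IsSpanningTree G' Td ∧
      ∀ S : SimpleGraph V', IsSpanningTree G' S → graphWeight S w' ≤ graphWeight Td w') :
    ∀ e ∈ G.edgeSet, (e ∈ T.edgeSet ↔ φ e ∉ Td.edgeSet) := by
  classical
  -- dual weight computation
  have hgw : ∀ T₀ : SimpleGraph V, T₀ ≤ G →
      graphWeight (fromEdgeSet (φ '' (G.edgeSet \ T₀.edgeSet))) w'
        = graphWeight G w - graphWeight T₀ w := by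
    intro T₀ hle
    have hsub : G.edgeSet \ T₀.edgeSet ⊆ G.edgeSet := Set.diff_subset
    set s : Finset (Sym2 V) := (G.edgeSet \ T₀.edgeSet).toFinite.toFinset with hs
    have hcoe : (↑s : Set (Sym2 V)) = G.edgeSet \ T₀.edgeSet := Set.Finite.coe_toFinset _
    have hmem : ∀ e ∈ s, e ∈ G.edgeSet := by
      intro e he
      rw [hs, Set.Finite.mem_toFinset] at he
      exact hsub he
    have himg : ↑(s.image φ) = (fromEdgeSet (φ '' (G.edgeSet \ T₀.edgeSet))).edgeSet := by
      rw [Finset.coe_image, hcoe, edgeSet_fromEdgeSet]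
      ext e'
      constructor
      · intro h
        refine ⟨h, fun hd => ?_⟩
        obtain ⟨e0, he0, rfl⟩ := h
        exact G'.not_isDiag_of_mem_edgeSet (hφ.mapsTo (hsub he0)) hd
      · exact fun h => h.1
    have h1 : graphWeight (fromEdgeSet (φ '' (G.edgeSet \ T₀.edgeSet))) w'
        = ∑ e ∈ s.image φ, w' e := (gw_eq_sum _ _ _ himg).symm ▸ gw_eq_sum _ _ _ himg
    rw [h1, Finset.sum_image (fun x hx y hy hxy => hφ.injOn (hmem x hx) (hmem y hy) hxy)]
    have h2 : ∀ e ∈ s, w' (φ e) = w e := fun e he => hww' e (hmem e he)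
    rw [Finset.sum_congr rfl h2]
    -- now the sum over the complement
    set EG : Finset (Sym2 V) := G.edgeSet.toFinite.toFinset with hEG
    set ET : Finset (Sym2 V) := T₀.edgeSet.toFinite.toFinset with hET
    have hsub' : ET ⊆ EG := by
      intro x hx
      rw [hET, Set.Finite.mem_toFinset] at hx
      rw [hEG, Set.Finite.mem_toFinset]
      exact edgeSet_subset_edgeSet.mpr hle hx
    have hseq : s = EG \ ET := by
      apply Finset.coe_injective
      rw [hcoe, Finset.coe_sdiff, hEG, hET, Set.Finite.coe_toFinset, Set.Finite.coe_toFinset]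
    rw [hseq, Finset.sum_sdiff_eq_sub hsub', gw_eq_sum G w EG (by rw [hEG, Set.Finite.coe_toFinset]),
      gw_eq_sum T₀ w ET (by rw [hET, Set.Finite.coe_toFinset])]
  -- the pullback T₂ of the complement of Td
  set A : Set (Sym2 V) := {e | e ∈ G.edgeSet ∧ φ e ∉ Td.edgeSet} with hA
  set T₂ : SimpleGraph V := fromEdgeSet A with hT₂def
  have hAG : A ⊆ G.edgeSet := fun e he => he.1
  have hT₂le : T₂ ≤ G := by
    rw [hT₂def, ← fromEdgeSet_edgeSet G]
    exact fromEdgeSet_mono hAG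
  have hT₂E : T₂.edgeSet = A := by
    rw [hT₂def, edgeSet_fromEdgeSet]
    ext e'
    constructor
    · exact fun h => h.1
    · exact fun h => ⟨h, fun hd => G.not_isDiag_of_mem_edgeSet (hAG h) hd⟩
  have hTdG' : Td.edgeSet ⊆ G'.edgeSet := edgeSet_subset_edgeSet.mpr hTd.1.1
  have hcompl : G.edgeSet \ T₂.edgeSet = {e | e ∈ G.edgeSet ∧ φ e ∈ Td.edgeSet} := by
    rw [hT₂E]
    ext e'
    simp only [Set.mem_diff, hA, Set.mem_setOf_eq, not_and, not_not]
    constructor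
    · rintro ⟨h1, h2⟩
      exact ⟨h1, h2 h1⟩
    · rintro ⟨h1, h2⟩
      exact ⟨h1, fun _ => h2⟩
  have hTdeq : fromEdgeSet (φ '' (G.edgeSet \ T₂.edgeSet)) = Td := by
    have himg : φ '' (G.edgeSet \ T₂.edgeSet) = Td.edgeSet := by
      rw [hcompl]
      ext f
      constructor
      · rintro ⟨e, ⟨-, heTd⟩, rfl⟩
        exact heTd
      · intro hf
        obtain ⟨e, heG, rfl⟩ := hφ.surjOn (hTdG' hf)
        exact ⟨e, ⟨heG, hf⟩, rfl⟩
    rw [himg, fromEdgeSet_edgeSet]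
  have hT₂st : IsSpanningTree G T₂ := (hdual T₂ hT₂le).mpr (hTdeq ▸ hTd.1)
  have hSst : IsSpanningTree G' (fromEdgeSet (φ '' (G.edgeSet \ T.edgeSet))) :=
    (hdual T hT.1.1).mp hT.1
  -- weight comparison
  have hgwTd : graphWeight Td w' = graphWeight G w - graphWeight T₂ w := by
    rw [← hTdeq]
    exact hgw T₂ hT₂le
  have hgwS := hgw T hT.1.1
  have h1 := hTd.2 _ hSst
  rw [hgwS, hgwTd] at h1
  have h2 := hT.2 T₂ hT₂st
  have hT2mst : IsMST G w T₂ := ⟨hT₂st, fun S hS => le_trans (by linarith) (hT.2 S hS)⟩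
  have hTeq : T = T₂ := mst_unique hw hT hT2mst
  intro e he
  rw [hTeq, hT₂E]
  simp only [hA, Set.mem_setOf_eq]
  exact ⟨fun h => h.2, fun h => ⟨he, h⟩⟩
end

section
/- Let G be a finite connected graph with injective edge weights w, and let p ∈ ℝ. Suppose every p-cluster of G is joined to every other via the contracted graph G^p whose minimal spanning tree is T^p. Then for any two distinct p-clusters C₁ and C₂, there is a unique path in the minimal spanning tree T of G connecting C₁ to C₂ that uses no vertex of C₁ ∪ C₂ as an interior repeated cluster, namely: the set of edges of T with weight > p traversed between C₁ and C₂ is exactly the edge set of the unique path from the vertex [C₁] to [C₂] in T^p. -/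
open SimpleGraph

variable {V : Type*}

private lemma reach_lift {G H : SimpleGraph V} (h : ∀ ⦃u v : V⦄, G.Adj u v → H.Reachable u v)
    {x y : V} (hxy : G.Reachable x y) : H.Reachable x y := by
  obtain ⟨W⟩ := hxy
  induction W with
  | nil => exact Reachable.refl _
  | cons h' _ ih => exact (h h').trans ih

private lemma reach_del {G : SimpleGraph V} {u v : V} (W : G.Walk u v) {s : Set (Sym2 V)}
    (h : ∀ f ∈ W.edges, f ∉ s) : (G.deleteEdges s).Reachable u v :=
  ⟨W.transfer _ (fun f hf => by
    rw [edgeSet_deleteEdges]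
    exact ⟨W.edges_subset_edgeSet hf, h f hf⟩)⟩

private lemma walk_split {G : SimpleGraph V} {u v : V} (W : G.Walk u v) (hW : W.edges.Nodup)
    {e : Sym2 V} (he : e ∈ W.edges) :
    ∃ a b, e = s(a, b) ∧ (G.deleteEdges {e}).Reachable u a ∧
      (G.deleteEdges {e}).Reachable b v := by
  induction W with
  | nil => simp at he
  | @cons u u₁ v h' W' ih =>
    rw [Walk.edges_cons] at he hW
    rcases List.mem_cons.1 he with rfl | he'
    · refine ⟨u, u₁, rfl, Reachable.refl _, reach_del W' ?_⟩
      intro f hf hfs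
      rw [Set.mem_singleton_iff] at hfs
      exact (List.nodup_cons.1 hW).1 (hfs ▸ hf)
    · obtain ⟨a, b, heab, h1, h2⟩ := ih (List.nodup_cons.1 hW).2 he'
      refine ⟨a, b, heab, Reachable.trans ⟨Walk.cons (deleteEdges_adj.2 ⟨h', ?_⟩) Walk.nil⟩ h1, h2⟩
      intro hc
      rw [Set.mem_singleton_iff] at hc
      exact (List.nodup_cons.1 hW).1 (hc ▸ he')

private lemma sdiff_single (G : SimpleGraph V) (e : Sym2 V) :
    G \ SimpleGraph.fromEdgeSet {e} = G.deleteEdges {e} := by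
  ext u v
  simp only [sdiff_adj, fromEdgeSet_adj, Set.mem_singleton_iff, deleteEdges_adj]
  constructor
  · rintro ⟨h1, h2⟩
    exact ⟨h1, fun h => h2 ⟨h, h1.ne⟩⟩
  · rintro ⟨h1, h2⟩
    exact ⟨h1, fun h => h2 h.1⟩

private lemma key [Fintype V] {G T : SimpleGraph V} {w : Sym2 V → ℝ} (hT : IsMST G w T)
    {p : ℝ} {e : Sym2 V} (hep : p < w e) {u v : V}
    (huv : (SimpleGraph.fromEdgeSet ({f ∈ G.edgeSet | w f ≤ p} ∪
        ({f ∈ T.edgeSet | p < w f} \ {e}))).Adj u v) :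
    (T.deleteEdges {e}).Reachable u v := by
  classical
  obtain ⟨hmem, hne⟩ := (fromEdgeSet_adj _).1 huv
  rcases hmem with hmem | hmem
  case inr =>
    obtain ⟨hf1, hfe⟩ := hmem
    exact ⟨Walk.cons (deleteEdges_adj.2 ⟨(mem_edgeSet _).1 hf1.1, hfe⟩) Walk.nil⟩
  case inl =>
  obtain ⟨hfG, hfp⟩ := hmem
  by_contra hnr
  have hfe : s(u, v) ≠ e := fun h => absurd hfp (by rw [h]; exact not_le.2 hep)
  have hfT : s(u, v) ∉ T.edgeSet := fun h =>
    hnr ⟨Walk.cons (deleteEdges_adj.2 ⟨(mem_edgeSet _).1 h, by simpa using hfe⟩) Walk.nil⟩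
  set T' := SimpleGraph.fromEdgeSet (T.edgeSet \ {e} ∪ {s(u, v)}) with hT'def
  have hT'edges : T'.edgeSet = T.edgeSet \ {e} ∪ {s(u, v)} := by
    rw [hT'def, edgeSet_fromEdgeSet]
    refine sdiff_eq_self_iff_disjoint.2 (Set.disjoint_left.2 ?_)
    rintro f hd (hf | hf)
    · exact T.not_isDiag_of_mem_edgeSet hf.1 hd
    · rw [Set.mem_singleton_iff] at hf
      subst hf
      exact hne (Sym2.mk_isDiag_iff.1 hd)
  have hTle : T ≤ G := hT.1.1
  have hT'le : T' ≤ G := by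
    rw [← edgeSet_subset_edgeSet, hT'edges]
    rintro f (⟨hf, _⟩ | hf)
    · exact edgeSet_mono hTle hf
    · rw [Set.mem_singleton_iff] at hf
      exact hf ▸ hfG
  have hdel_le : T.deleteEdges {e} ≤ T' := by
    rw [← edgeSet_subset_edgeSet, edgeSet_deleteEdges, hT'edges]
    exact Set.subset_union_left
  have hT'uv : T'.Adj u v := (fromEdgeSet_adj _).2 ⟨Or.inr rfl, hne⟩
  have hTtree := hT.1.2
  have hconn := hTtree.isConnected
  have hacy := hTtree.IsAcyclic
  obtain ⟨W⟩ := hconn.preconnected u v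
  have heW : e ∈ (W.toPath : T.Walk u v).edges := by
    by_contra h
    exact hnr (reach_del _ (fun f hf hfs => h ((Set.mem_singleton_iff.1 hfs) ▸ hf)))
  obtain ⟨a, b, heab, hua, hbv⟩ := walk_split _ (W.toPath.2.isTrail.edges_nodup) heW
  have heT : e ∈ T.edgeSet := Walk.edges_subset_edgeSet _ heW
  have hT'ab : T'.Reachable a b :=
    ((hua.mono hdel_le).symm.trans (hT'uv.reachable.trans (hbv.mono hdel_le).symm))
  have hT'conn : T'.Connected := by
    have hpre : ∀ ⦃z z' : V⦄, T.Adj z z' → T'.Reachable z z' := by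
      intro z z' hzz
      by_cases hze : s(z, z') = e
      · rw [heab] at hze
        rcases Sym2.eq_iff.1 hze with ⟨rfl, rfl⟩ | ⟨rfl, rfl⟩
        · exact hT'ab
        · exact hT'ab.symm
      · exact ((fromEdgeSet_adj _).2 ⟨Or.inl ⟨(mem_edgeSet _).2 hzz, hze⟩, hzz.ne⟩).reachable
    haveI := hconn.nonempty
    exact ⟨fun z z' => reach_lift hpre (hconn.preconnected z z')⟩
  have hEqdel : T' \ SimpleGraph.fromEdgeSet {s(u, v)} = T.deleteEdges {e} := by
    rw [sdiff_single, ← edgeSet_inj, edgeSet_deleteEdges, edgeSet_deleteEdges, hT'edges]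
    ext f
    simp only [Set.mem_diff, Set.mem_union, Set.mem_singleton_iff]
    constructor
    · rintro ⟨(⟨h1, h2⟩ | h1), h3⟩
      · exact ⟨h1, h2⟩
      · exact absurd h1 h3
    · rintro ⟨h1, h2⟩
      exact ⟨Or.inl ⟨h1, h2⟩, fun hh => hfT (hh ▸ h1)⟩
  have hbr : T'.IsBridge s(u, v) := by
    refine isBridge_iff.2 ?_
    rw [← sdiff_single, hEqdel]
    exact hnr
  have hT'acy : T'.IsAcyclic := by
    intro z c hc
    have hfnc : s(u, v) ∉ c.edges := (isBridge_iff_forall_cycle_notMem hT'uv).1 hbr c hc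
    have hsub : ∀ f ∈ c.edges, f ∈ T.edgeSet := by
      intro f hf
      have hmem := c.edges_subset_edgeSet hf
      rw [hT'edges] at hmem
      rcases hmem with ⟨h1, _⟩ | h1
      · exact h1
      · rw [Set.mem_singleton_iff] at h1
        exact absurd (h1 ▸ hf) hfnc
    exact hacy (c.transfer T hsub) (hc.transfer hsub)
  have hle := hT.2 T' ⟨hT'le, ⟨hT'conn, hT'acy⟩⟩
  have hes : e ∈ T.edgeSet.toFinite.toFinset := (Set.Finite.mem_toFinset _).2 heT
  have hfns : s(u, v) ∉ (T.edgeSet.toFinite.toFinset).erase e := fun h =>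
    hfT ((Set.Finite.mem_toFinset _).1 (Finset.erase_subset _ _ h))
  have hs' : T'.edgeSet.toFinite.toFinset =
      insert (s(u, v)) ((T.edgeSet.toFinite.toFinset).erase e) := by
    ext f
    simp only [Set.Finite.mem_toFinset, hT'edges, Finset.mem_insert, Finset.mem_erase,
      Set.mem_union, Set.mem_diff, Set.mem_singleton_iff, Set.Finite.mem_toFinset]
    tauto
  have hgw : graphWeight T' w = w (s(u, v)) + (graphWeight T w - w e) := by
    unfold graphWeight
    rw [hs', Finset.sum_insert hfns]
    congr 1
    rw [eq_sub_iff_add_eq, Finset.sum_erase_add _ _ hes]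
  rw [hgw] at hle
  linarith

private lemma char [Fintype V] {G T : SimpleGraph V} {w : Sym2 V → ℝ} (hT : IsMST G w T)
    {p : ℝ} {x y : V} (pth : T.Walk x y) (hp : pth.IsPath) (e : Sym2 V) :
    (e ∈ pth.edges ∧ p < w e) ↔
      (e ∈ T.edgeSet ∧ p < w e ∧
        ¬ (SimpleGraph.fromEdgeSet ({f ∈ G.edgeSet | w f ≤ p} ∪
            ({f ∈ T.edgeSet | p < w f} \ {e}))).Reachable x y) := by
  constructor
  · rintro ⟨hein, hew⟩
    refine ⟨pth.edges_subset_edgeSet hein, hew, fun hreach => ?_⟩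
    have hxyT : (T.deleteEdges {e}).Reachable x y :=
      reach_lift (fun u v huv => key hT hew huv) hreach
    obtain ⟨a, b, heab, hxa, hby⟩ := walk_split pth hp.isTrail.edges_nodup hein
    have hbridge := isAcyclic_iff_forall_edge_isBridge.1 hT.1.2.IsAcyclic
      (pth.edges_subset_edgeSet hein)
    rw [heab, isBridge_iff] at hbridge
    apply hbridge
    rw [← heab]
    exact hxa.symm.trans (hxyT.trans hby.symm)
  · rintro ⟨heT, hew, hnr⟩
    by_contra hne
    have hne' : e ∉ pth.edges := fun h => hne ⟨h, hew⟩
    apply hnr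
    refine ⟨pth.transfer _ (fun f hf => ?_)⟩
    rw [edgeSet_fromEdgeSet]
    have hfT : f ∈ T.edgeSet := pth.edges_subset_edgeSet hf
    refine ⟨?_, fun hd => T.not_isDiag_of_mem_edgeSet hfT hd⟩
    by_cases hfp : w f ≤ p
    · exact Or.inl ⟨edgeSet_mono hT.1.1 hfT, hfp⟩
    · exact Or.inr ⟨⟨hfT, not_le.1 hfp⟩,
        fun hfe => hne' ((Set.mem_singleton_iff.1 hfe) ▸ hf)⟩

/-- For two distinct `p`-clusters `C₁ ∋ x` and `C₂ ∋ y`, the set of edges of weight `> p` on the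
`T`-path between the clusters is exactly the edge set of the unique path between the contracted
vertices `[C₁]` and `[C₂]` in the contracted tree `T^p`: an edge of weight `> p` lies on the
`T`-path from `x` to `y` iff it is an edge of `T` whose removal from `T^p` (i.e. from the graph
of all edges of weight `≤ p` together with the edges of `T` of weight `> p`) disconnects `x`
from `y`. Moreover this set of edges depends only on the two clusters, not on the chosen
representatives. -/
theorem mst_path_between_clusters [Fintype V] (G : SimpleGraph V) (hG : G.Connected)
    (w : Sym2 V → ℝ) (hw : Set.InjOn w G.edgeSet)
    (T : SimpleGraph V) (hT : IsMST G w T) (p : ℝ) (x y : V)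
    (hxy : ¬ (G.deleteEdges {e | p < w e}).Reachable x y) :
    (∀ pth : T.Walk x y, pth.IsPath → ∀ e : Sym2 V,
      ((e ∈ pth.edges ∧ p < w e) ↔
        (e ∈ T.edgeSet ∧ p < w e ∧
          ¬ (SimpleGraph.fromEdgeSet ({f ∈ G.edgeSet | w f ≤ p} ∪
              ({f ∈ T.edgeSet | p < w f} \ {e}))).Reachable x y))) ∧
    ∀ x' y' : V, (G.deleteEdges {e | p < w e}).Reachable x x' →
      (G.deleteEdges {e | p < w e}).Reachable y y' →
      ∀ (pth : T.Walk x y) (qth : T.Walk x' y'), pth.IsPath → qth.IsPath →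
        {e | e ∈ pth.edges ∧ p < w e} = {e | e ∈ qth.edges ∧ p < w e} := by
  refine ⟨fun pth hp e => char hT pth hp e, ?_⟩
  intro x' y' hx hy pth qth hp hq
  have hmono : ∀ e : Sym2 V, (G.deleteEdges {f | p < w f}) ≤
      SimpleGraph.fromEdgeSet ({f ∈ G.edgeSet | w f ≤ p} ∪
        ({f ∈ T.edgeSet | p < w f} \ {e})) := by
    intro e u v huv
    rw [deleteEdges_adj] at huv
    exact (fromEdgeSet_adj _).2 ⟨Or.inl ⟨(mem_edgeSet _).2 huv.1, not_lt.1 huv.2⟩, huv.1.ne⟩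
  ext e
  simp only [Set.mem_setOf_eq]
  rw [char hT pth hp e, char hT qth hq e]
  constructor
  · rintro ⟨h1, h2, h3⟩
    exact ⟨h1, h2, fun hr => h3 (((hx.mono (hmono e)).trans hr).trans (hy.mono (hmono e)).symm)⟩
  · rintro ⟨h1, h2, h3⟩
    exact ⟨h1, h2, fun hr => h3 (((hx.mono (hmono e)).symm.trans hr).trans (hy.mono (hmono e)))⟩
end
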